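/- arXiv:1101.5894 — 4 statements merged into one kernel-verified Lean document; each statement's English description precedes it below -/
import Mathlib

section
/- In any model of SpecRel, relativistic (Minkowski) distance between events is absolute: if inertial observers o and o′ coordinatize the same event at x̄ and x̄′ respectively (i.e., ∀ b, W(o,b,x̄) ↔ W(o′,b,x̄′)), and likewise the same event at ȳ and ȳ′, then μ(x̄,ȳ) = μ(x̄′,ȳ′), where μ(x̄,ȳ) := (x₁−y₁)²+(x₂−y₂)²+(x₃−y₃)² − (x₄−y₄)². -/
def sp2 {Q : Type} [Field Q] [LinearOrder Q] [IsStrictOrderedRing Q] (x y : Fin 4 → Q) : Q :=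
  (x 0 - y 0)^2 + (x 1 - y 1)^2 + (x 2 - y 2)^2

def tm2 {Q : Type} [Field Q] [LinearOrder Q] [IsStrictOrderedRing Q] (x y : Fin 4 → Q) : Q :=
  (x 3 - y 3)^2

def mu {Q : Type} [Field Q] [LinearOrder Q] [IsStrictOrderedRing Q] (x y : Fin 4 → Q) : Q :=
  sp2 x y - tm2 x y

def IOb {B Q : Type} (IB : B → Prop) (W : B → B → (Fin 4 → Q) → Prop) (o : B) : Prop :=
  IB o ∧ ∃ b x, W o b x

structure SpecRel {B Q : Type} [Field Q] [LinearOrder Q] [IsStrictOrderedRing Q]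
    (IB Ph : B → Prop) (W : B → B → (Fin 4 → Q) → Prop) : Prop where
  axSelf : ∀ o, IOb IB W o →
    ∀ x : Fin 4 → Q, (W o o x ↔ x 0 = 0 ∧ x 1 = 0 ∧ x 2 = 0)
  axPh : ∀ o, IOb IB W o → ∀ x y : Fin 4 → Q,
    (∃ p, Ph p ∧ W o p x ∧ W o p y) ↔ sp2 x y = tm2 x y
  axEv : ∀ o o', IOb IB W o → IOb IB W o' →
    ∀ x : Fin 4 → Q, ∃ x' : Fin 4 → Q, ∀ b, W o b x ↔ W o' b x'
  axSymd : ∀ o o' (x y x' y' : Fin 4 → Q), IOb IB W o → IOb IB W o' →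
    x 3 = y 3 → x' 3 = y' 3 →
    (∀ b, W o b x ↔ W o' b x') → (∀ b, W o b y ↔ W o' b y') →
    sp2 x y = sp2 x' y'


set_option linter.unusedSectionVars false
set_option maxHeartbeats 1000000

namespace SRproof
variable {Q : Type} [Field Q] [LinearOrder Q] [IsStrictOrderedRing Q]

def v4 (a b c d : Q) : Fin 4 → Q := fun i =>
  if i = 0 then a else if i = 1 then b else if i = 2 then c else d

@[simp] lemma v4_0 (a b c d : Q) : v4 a b c d 0 = a := rfl
@[simp] lemma v4_1 (a b c d : Q) : v4 a b c d 1 = b := rfl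
@[simp] lemma v4_2 (a b c d : Q) : v4 a b c d 2 = c := rfl
@[simp] lemma v4_3 (a b c d : Q) : v4 a b c d 3 = d := rfl

def ip (x y : Fin 4 → Q) : Q := x 0 * y 0 + x 1 * y 1 + x 2 * y 2 - x 3 * y 3

def qf (x : Fin 4 → Q) : Q := ip x x

lemma vec_ext {x y : Fin 4 → Q} (h0 : x 0 = y 0) (h1 : x 1 = y 1)
    (h2 : x 2 = y 2) (h3 : x 3 = y 3) : x = y := by
  funext i; fin_cases i <;> assumption

@[simp] lemma add_app (x y : Fin 4 → Q) (i : Fin 4) : (x + y) i = x i + y i := rfl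
@[simp] lemma sub_app (x y : Fin 4 → Q) (i : Fin 4) : (x - y) i = x i - y i := rfl
@[simp] lemma neg_app (x : Fin 4 → Q) (i : Fin 4) : (-x) i = -(x i) := rfl
@[simp] lemma smul_app (c : Q) (x : Fin 4 → Q) (i : Fin 4) : (c • x) i = c * x i := rfl
@[simp] lemma zero_app (i : Fin 4) : (0 : Fin 4 → Q) i = 0 := rfl

lemma ip_comm (x y : Fin 4 → Q) : ip x y = ip y x := by simp [ip]; ring
lemma ip_add_left (x y z : Fin 4 → Q) : ip (x + y) z = ip x z + ip y z := by simp [ip]; ring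
lemma ip_smul_left (c : Q) (x y : Fin 4 → Q) : ip (c • x) y = c * ip x y := by simp [ip]; ring
lemma ip_smul_right (c : Q) (x y : Fin 4 → Q) : ip x (c • y) = c * ip x y := by simp [ip]; ring

lemma qf_expand (x y : Fin 4 → Q) : qf (x + y) = qf x + 2 * ip x y + qf y := by
  simp [qf, ip]; ring

lemma qf_sub (x y : Fin 4 → Q) : qf (x - y) = qf x - 2 * ip x y + qf y := by
  simp [qf, ip]; ring

lemma qf_smul (c : Q) (x : Fin 4 → Q) : qf (c • x) = c ^ 2 * qf x := by
  simp [qf, ip]; ring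

lemma qf_neg (x : Fin 4 → Q) : qf (-x) = qf x := by simp only [qf, ip, neg_app]; ring

lemma sq3_zero {a b c : Q} (h : a^2 + b^2 + c^2 = 0) : a = 0 ∧ b = 0 ∧ c = 0 := by
  have ha : a^2 = 0 := by nlinarith [sq_nonneg a, sq_nonneg b, sq_nonneg c]
  have hb : b^2 = 0 := by nlinarith [sq_nonneg a, sq_nonneg b, sq_nonneg c]
  have hc : c^2 = 0 := by nlinarith [sq_nonneg a, sq_nonneg b, sq_nonneg c]
  exact ⟨pow_eq_zero_iff (two_ne_zero) |>.mp ha,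
    pow_eq_zero_iff (two_ne_zero) |>.mp hb, pow_eq_zero_iff (two_ne_zero) |>.mp hc⟩

lemma null_time_ne {u : Fin 4 → Q} (hu : qf u = 0) (h0 : u ≠ 0) : u 3 ≠ 0 := by
  intro h3
  apply h0
  simp only [qf, ip] at hu
  have hsum : u 0 ^2 + u 1 ^2 + u 2^2 = 0 := by linear_combination hu + u 3 * h3
  obtain ⟨a, b, c⟩ := sq3_zero hsum
  exact vec_ext (by simpa using a) (by simpa using b) (by simpa using c) (by simpa using h3)

lemma null_orth_dep {u v : Fin 4 → Q} (hu : qf u = 0) (hv : qf v = 0)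
    (ho : ip u v = 0) (h0 : u ≠ 0) : ∃ c : Q, v = c • u := by
  have h3 : u 3 ≠ 0 := null_time_ne hu h0
  refine ⟨v 3 / u 3, ?_⟩
  simp only [qf, ip] at hu hv ho
  have key : (u 3 * v 0 - v 3 * u 0)^2 + (u 3 * v 1 - v 3 * u 1)^2
      + (u 3 * v 2 - v 3 * u 2)^2 = 0 := by
    linear_combination (u 3 * u 3) * hv + (v 3 * v 3) * hu - 2 * (u 3 * v 3) * ho
  obtain ⟨a, b, c⟩ := sq3_zero key
  have e0 : u 3 * v 0 = v 3 * u 0 := by linarith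
  have e1 : u 3 * v 1 = v 3 * u 1 := by linarith
  have e2 : u 3 * v 2 = v 3 * u 2 := by linarith
  refine vec_ext ?_ ?_ ?_ ?_ <;> simp only [smul_app] <;> field_simp <;> linarith

def m1 : Fin 4 → Q := v4 1 0 0 1
def m2 : Fin 4 → Q := v4 (-1) 0 0 1
def m3 : Fin 4 → Q := v4 0 1 0 1
def m4 : Fin 4 → Q := v4 0 (-1) 0 1
def m5 : Fin 4 → Q := v4 0 0 1 1
def m6 : Fin 4 → Q := v4 0 0 (-1) 1

lemma qf_m1 : qf (m1 : Fin 4 → Q) = 0 := by simp [qf, ip, m1]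
lemma qf_m2 : qf (m2 : Fin 4 → Q) = 0 := by simp [qf, ip, m2]
lemma qf_m3 : qf (m3 : Fin 4 → Q) = 0 := by simp [qf, ip, m3]
lemma qf_m4 : qf (m4 : Fin 4 → Q) = 0 := by simp [qf, ip, m4]
lemma qf_m5 : qf (m5 : Fin 4 → Q) = 0 := by simp [qf, ip, m5]
lemma qf_m6 : qf (m6 : Fin 4 → Q) = 0 := by simp [qf, ip, m6]

lemma m1_ne : (m1 : Fin 4 → Q) ≠ 0 := by
  intro h; have := congrFun h 3; simp [m1] at this
lemma m2_ne : (m2 : Fin 4 → Q) ≠ 0 := by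
  intro h; have := congrFun h 3; simp [m2] at this
lemma m3_ne : (m3 : Fin 4 → Q) ≠ 0 := by
  intro h; have := congrFun h 3; simp [m3] at this
lemma m4_ne : (m4 : Fin 4 → Q) ≠ 0 := by
  intro h; have := congrFun h 3; simp [m4] at this
lemma m5_ne : (m5 : Fin 4 → Q) ≠ 0 := by
  intro h; have := congrFun h 3; simp [m5] at this
lemma m6_ne : (m6 : Fin 4 → Q) ≠ 0 := by
  intro h; have := congrFun h 3; simp [m6] at this

lemma orth_all_null_eq_zero {u : Fin 4 → Q}
    (h : ∀ v : Fin 4 → Q, qf v = 0 → ip u v = 0) : u = 0 := by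
  have h1 := h m1 qf_m1
  have h2 := h m2 qf_m2
  have h3 := h m3 qf_m3
  have h4 := h m4 qf_m4
  have h5 := h m5 qf_m5
  simp [ip, m1, m2, m3, m4, m5] at h1 h2 h3 h4 h5
  refine vec_ext ?_ ?_ ?_ ?_ <;> simp only [zero_app] <;> linarith

lemma cone_sep {a b : Fin 4 → Q}
    (h : ∀ c : Fin 4 → Q, qf (a - c) = 0 ↔ qf (b - c) = 0) : a = b := by
  have key : ∀ v : Fin 4 → Q, qf v = 0 → qf (b - a - v) = 0 := by
    intro v hv
    have h1 : qf (a - (a + v)) = 0 := by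
      rw [show a - (a + v) = -v by abel, qf_neg]; exact hv
    have h2 := (h (a + v)).mp h1
    rwa [show b - (a + v) = b - a - v by abel] at h2
  have h0 : qf (b - a) = 0 := by
    have := key 0 (by simp [qf, ip])
    simpa using this
  have horth : ∀ v : Fin 4 → Q, qf v = 0 → ip (b - a) v = 0 := by
    intro v hv
    have h2 := key v hv
    rw [qf_sub, h0, hv] at h2
    linarith
  exact (sub_eq_zero.mp (orth_all_null_eq_zero horth)).symm

/-! ### The abstract setting: a bijection preserving nullity -/

structure Good (f : (Fin 4 → Q) → (Fin 4 → Q)) : Prop where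
  bij : Function.Bijective f
  nulliff : ∀ a b : Fin 4 → Q, (qf (a - b) = 0 ↔ qf (f a - f b) = 0)
  zero : f 0 = 0

variable {f : (Fin 4 → Q) → (Fin 4 → Q)}

lemma Good.inj (hf : Good f) {a b : Fin 4 → Q} (h : f a = f b) : a = b :=
  hf.bij.injective h

lemma Good.img_null (hf : Good f) {a b : Fin 4 → Q} (h : qf (a - b) = 0) :
    qf (f a - f b) = 0 := (hf.nulliff a b).mp h

lemma Good.img_ne (hf : Good f) {a b : Fin 4 → Q} (h : a ≠ b) : f a - f b ≠ 0 := by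
  intro h0
  exact h (hf.inj (sub_eq_zero.mp h0))

/-- smul coefficients against a nonzero vector are unique -/
lemma smul_coeff_unique {x : Fin 4 → Q} (hx : x ≠ 0) {c d : Q}
    (h : c • x = d • x) : c = d := by
  by_contra hcd
  apply hx
  have : (c - d) • x = 0 := by
    rw [sub_smul, h, sub_self]
  rcases smul_eq_zero.mp this with h' | h'
  · exact absurd (sub_eq_zero.mp h') hcd
  · exact h'

/-- local collinearity along a null line -/
lemma lineLocal (hf : Good f) {u : Fin 4 → Q} (hu : qf u = 0) (p : Fin 4 → Q) (s : Q) :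
    ∃ c : Q, f (p + s • u) - f p = c • (f (p + u) - f p) := by
  by_cases hu0 : u = 0
  · subst hu0
    exact ⟨0, by simp⟩
  have hv1 : qf (f (p + s • u) - f p) = 0 := by
    apply hf.img_null
    rw [show p + s • u - p = s • u by abel, qf_smul, hu]; ring
  have hv2 : qf (f (p + u) - f p) = 0 := by
    apply hf.img_null
    rw [show p + u - p = u by abel]; exact hu
  have hv12 : qf ((f (p + s • u) - f p) - (f (p + u) - f p)) = 0 := by
    rw [show (f (p + s • u) - f p) - (f (p + u) - f p) = f (p + s•u) - f (p + u) by abel]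
    apply hf.img_null
    rw [show p + s • u - (p + u) = (s - 1) • u by rw [sub_smul, one_smul]; abel, qf_smul, hu]
    ring
  have hip : ip (f (p + u) - f p) (f (p + s • u) - f p) = 0 := by
    rw [qf_sub] at hv12
    rw [hv1, hv2] at hv12
    rw [ip_comm]; linarith
  have hne : f (p + u) - f p ≠ 0 := by
    apply hf.img_ne
    intro h
    exact hu0 (by have := congrArg (· - p) h; simpa using this)
  exact null_orth_dep hv2 hv1 hip hne

lemma Dp_ne (hf : Good f) {u : Fin 4 → Q} (hu0 : u ≠ 0) (p : Fin 4 → Q) :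
    f (p + u) - f p ≠ 0 := by
  apply hf.img_ne
  intro h
  exact hu0 (by have := congrArg (· - p) h; simpa using this)

/-- surjectivity of the local line coefficient -/
lemma lineLocalOnto (hf : Good f) {u : Fin 4 → Q} (hu : qf u = 0) (hu0 : u ≠ 0)
    (p : Fin 4 → Q) (c : Q) :
    ∃ s : Q, f (p + s • u) - f p = c • (f (p + u) - f p) := by
  obtain ⟨z, hz⟩ := hf.bij.surjective (f p + c • (f (p + u) - f p))
  have hz1 : qf (z - p) = 0 := by
    apply (hf.nulliff z p).mpr
    rw [hz, show f p + c • (f (p + u) - f p) - f p = c • (f (p + u) - f p) by abel,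
      qf_smul]
    have : qf (f (p + u) - f p) = 0 := by
      apply hf.img_null
      rw [show p + u - p = u by abel]; exact hu
    rw [this]; ring
  have hz2 : qf (z - (p + u)) = 0 := by
    apply (hf.nulliff z (p + u)).mpr
    rw [hz, show f p + c • (f (p + u) - f p) - f (p + u) = (c - 1) • (f (p + u) - f p) by
      rw [sub_smul, one_smul]; abel, qf_smul]
    have : qf (f (p + u) - f p) = 0 := by
      apply hf.img_null
      rw [show p + u - p = u by abel]; exact hu
    rw [this]; ring
  have hip : ip u (z - p) = 0 := by
    have h2 : qf ((z - p) - u) = 0 := by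
      rw [show (z - p) - u = z - (p + u) by abel]; exact hz2
    rw [qf_sub, hz1, hu] at h2
    rw [ip_comm]; linarith
  obtain ⟨s, hs⟩ := null_orth_dep hu hz1 hip hu0
  refine ⟨s, ?_⟩
  have : z = p + s • u := by
    have := hs
    rw [← this]; abel
  rw [← this, hz]; abel


lemma qf_comb3 (B W U : Fin 4 → Q) (τ σ : Q) :
    qf (B + τ • W - σ • U) = qf B + τ^2 * qf W + σ^2 * qf U
      + 2*τ*ip B W - 2*σ*ip B U - 2*σ*τ*ip W U := by
  simp [qf, ip]; ring

lemma Good.null_of (hf : Good f) {u : Fin 4 → Q} (hu : qf u = 0) :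
    qf (f u) = 0 := by
  have h := hf.img_null (a := u) (b := 0) (by simpa using hu)
  rwa [hf.zero, sub_zero] at h

lemma Good.ne_zero_of (hf : Good f) {u : Fin 4 → Q} (hu0 : u ≠ 0) : f u ≠ 0 := by
  have := hf.img_ne (a := u) (b := 0) hu0
  rwa [hf.zero, sub_zero] at this

/-- all image null lines in direction `u` are parallel to `f u` -/
lemma dirGlobal (hf : Good f) {u : Fin 4 → Q} (hu : qf u = 0) (hu0 : u ≠ 0)
    (p : Fin 4 → Q) :
    ∃ e : Q, e ≠ 0 ∧ f (p + u) - f p = e • f u := by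
  have hfu_null : qf (f u) = 0 := hf.null_of hu
  have hfu_ne : f u ≠ 0 := hf.ne_zero_of hu0
  have hWnull : qf (f (p + u) - f p) = 0 := by
    apply hf.img_null; rw [show p + u - p = u by abel]; exact hu
  have hWne : f (p + u) - f p ≠ 0 := Dp_ne hf hu0 p
  by_cases hp : ∃ r : Q, p = r • u
  · obtain ⟨r, rfl⟩ := hp
    obtain ⟨cr, hcr⟩ := lineLocal hf hu 0 r
    obtain ⟨cr1, hcr1⟩ := lineLocal hf hu 0 (r+1)
    rw [zero_add, zero_add, hf.zero, sub_zero, sub_zero] at hcr hcr1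
    have key : f (r • u + u) - f (r • u) = (cr1 - cr) • f u := by
      rw [show r • u + u = (r+1) • u by rw [add_smul, one_smul], hcr1, hcr, sub_smul]
    refine ⟨cr1 - cr, ?_, key⟩
    intro h
    rw [h, zero_smul] at key
    exact hWne key
  · -- off-axis case
    have key : ip (f u) (f (p + u) - f p) = 0 := by
      by_contra g_ne
      set W := f (p + u) - f p with hW
      set g := ip (f u) W with hg
      set m := qf (f p) with hm
      set β := ip (f p) W with hβ
      set γ := ip (f p) (f u) with hγ
      by_cases ho : ip p u = 0
      · -- strongly parallel case: no null transversal at all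
        have hqfp : qf p ≠ 0 := by
          intro h
          obtain ⟨c, hc⟩ := null_orth_dep hu h (by rwa [ip_comm] at ho) hu0
          exact hp ⟨c, hc⟩
        have dom : ∀ s t : Q, qf ((p + t • u) - s • u) ≠ 0 := by
          intro s t
          rw [show (p + t • u) - s • u = p + (t - s) • u by rw [sub_smul]; abel,
            qf_expand, qf_smul, hu, ip_smul_right, ho]
          simpa using hqfp
        have img : ∀ s t : Q, qf (f (p + t • u) - f (s • u)) ≠ 0 := by
          intro s t h
          exact dom s t ((hf.nulliff _ _).mpr h)
        -- choose image parameters killing the quadric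
        set σ := β / g + 1 with hσ
        set τ := (2*σ*γ - m) / (-2*g) with hτ
        obtain ⟨s, hs⟩ := lineLocalOnto hf hu hu0 0 σ
        obtain ⟨t, ht⟩ := lineLocalOnto hf hu hu0 p τ
        rw [zero_add, zero_add, hf.zero, sub_zero, sub_zero] at hs
        apply img s t
        have hfpt : f (p + t • u) = f p + τ • W := by
          rw [← hW] at ht
          have := ht
          rw [sub_eq_iff_eq_add] at this
          rw [this]; abel
        rw [hfpt, hs, show f p + τ • W - σ • f u = f p + τ • W - σ • f u from rfl]
        rw [qf_comb3, hWnull, hfu_null, ← hm, ← hβ, ← hγ,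
          show ip W (f u) = g by rw [ip_comm, hg]]
        have hgne : (-2 : Q) * g ≠ 0 := by
          simp [g_ne]
        have hsg : 2*β - 2*σ*g = -2*g := by
          rw [hσ]; field_simp [g_ne]; ring
        have h1 : τ * (2*β - 2*σ*g) = 2*σ*γ - m := by
          rw [hsg, hτ, div_mul_cancel₀ _ hgne]
        linear_combination h1
      · -- weakly parallel case: transversal structure is an exact matching
        set c0 := -qf p / (2 * ip p u) with hc0
        have dom : ∀ s t : Q, (qf ((p + t • u) - s • u) = 0 ↔ t - s = c0) := by
          intro s t
          rw [show (p + t • u) - s • u = p + (t - s) • u by rw [sub_smul]; abel,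
            qf_expand, qf_smul, hu, ip_smul_right]
          constructor
          · intro h
            rw [hc0]
            field_simp
            linarith
          · intro h
            rw [h, hc0]
            field_simp
            ring
        have img : ∀ s t : Q, (qf (f (p + t • u) - f (s • u)) = 0 ↔ t - s = c0) := by
          intro s t
          rw [← hf.nulliff]
          exact dom s t
        obtain ⟨s, hs⟩ := lineLocalOnto hf hu hu0 0 (β / g)
        rw [zero_add, zero_add, hf.zero, sub_zero, sub_zero] at hs
        -- the quadric value is constant in t
        have const : ∀ t : Q, qf (f (p + t • u) - f (s • u)) = m - 2*(β/g)*γ := by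
          intro t
          obtain ⟨b, hb⟩ := lineLocal hf hu p t
          have hfpt : f (p + t • u) = f p + b • W := by
            rw [← hW] at hb
            rw [sub_eq_iff_eq_add] at hb
            rw [hb]; abel
          rw [hfpt, hs]
          rw [show f p + b • W - (β/g) • f u = f p + b • W - (β/g) • f u from rfl]
          rw [qf_comb3, hWnull, hfu_null, ← hm, ← hβ, ← hγ,
            show ip W (f u) = g by rw [ip_comm, hg]]
          have hbg : β / g * g = β := div_mul_cancel₀ _ g_ne
          linear_combination (-2*b) * hbg
        have e1 : m - 2*(β/g)*γ = 0 := by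
          rw [← const (s + c0)]
          rw [img]
          ring
        have e2 : (s + c0 + 1) - s = c0 := by
          rw [← img s (s + c0 + 1), const, e1]
        linarith [e2]
    obtain ⟨e, he⟩ := null_orth_dep hfu_null hWnull key hfu_ne
    refine ⟨e, ?_, he⟩
    intro h
    rw [h, zero_smul] at he
    exact hWne he

/-- global line coefficient existence -/
lemma lineGlobal (hf : Good f) {u : Fin 4 → Q} (hu : qf u = 0) (hu0 : u ≠ 0)
    (p : Fin 4 → Q) (s : Q) :
    ∃ c : Q, f (p + s • u) - f p = c • f u := by
  obtain ⟨c, hc⟩ := lineLocal hf hu p s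
  obtain ⟨e, _, he⟩ := dirGlobal hf hu hu0 p
  exact ⟨c * e, by rw [hc, he, smul_smul]⟩

open Classical in
noncomputable def psi (f : (Fin 4 → Q) → (Fin 4 → Q)) (p u : Fin 4 → Q) (s : Q) : Q :=
  if h : ∃ c : Q, f (p + s • u) - f p = c • f u then h.choose else 0

lemma psi_spec (hf : Good f) {u : Fin 4 → Q} (hu : qf u = 0) (hu0 : u ≠ 0)
    (p : Fin 4 → Q) (s : Q) :
    f (p + s • u) = f p + psi f p u s • f u := by
  have h := lineGlobal hf hu hu0 p s
  rw [psi, dif_pos h]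
  have := h.choose_spec
  rw [← this]; abel

lemma psi_unique (hf : Good f) {u : Fin 4 → Q} (hu : qf u = 0) (hu0 : u ≠ 0)
    (p : Fin 4 → Q) (s : Q) {c : Q} (h : f (p + s • u) = f p + c • f u) :
    psi f p u s = c := by
  have h2 := psi_spec hf hu hu0 p s
  rw [h2] at h
  have h3 : psi f p u s • f u = c • f u := by
    have := congrArg (· - f p) h
    simpa using this
  exact smul_coeff_unique (hf.ne_zero_of hu0) h3

lemma psi_zero (hf : Good f) {u : Fin 4 → Q} (hu : qf u = 0) (hu0 : u ≠ 0)
    (p : Fin 4 → Q) : psi f p u 0 = 0 := by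
  apply psi_unique hf hu hu0
  simp

lemma psi_base_one (hf : Good f) {u : Fin 4 → Q} (hu : qf u = 0) (hu0 : u ≠ 0) :
    psi f 0 u 1 = 1 := by
  apply psi_unique hf hu hu0
  simp [hf.zero]

lemma psi_inj (hf : Good f) {u : Fin 4 → Q} (hu : qf u = 0) (hu0 : u ≠ 0)
    (p : Fin 4 → Q) {s t : Q} (h : psi f p u s = psi f p u t) : s = t := by
  have hs := psi_spec hf hu hu0 p s
  have ht := psi_spec hf hu hu0 p t
  rw [h] at hs
  have := hf.inj (hs.trans ht.symm)
  have h2 : s • u = t • u := by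
    have := congrArg (· - p) this
    simpa using this
  exact smul_coeff_unique hu0 h2

lemma psi_onto (hf : Good f) {u : Fin 4 → Q} (hu : qf u = 0) (hu0 : u ≠ 0)
    (p : Fin 4 → Q) (c : Q) : ∃ s : Q, psi f p u s = c := by
  obtain ⟨e, he0, he⟩ := dirGlobal hf hu hu0 p
  obtain ⟨s, hs⟩ := lineLocalOnto hf hu hu0 p (c / e)
  refine ⟨s, psi_unique hf hu hu0 p s ?_⟩
  rw [sub_eq_iff_eq_add] at hs
  rw [hs, he, smul_smul, div_mul_cancel₀ _ he0]
  abel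

lemma psi_ne_zero (hf : Good f) {u : Fin 4 → Q} (hu : qf u = 0) (hu0 : u ≠ 0)
    (p : Fin 4 → Q) {s : Q} (hs : s ≠ 0) : psi f p u s ≠ 0 := by
  intro h
  apply hs
  exact psi_inj hf hu hu0 p (h.trans (psi_zero hf hu hu0 p).symm)

/-- images of independent null directions remain independent -/
lemma indepImages (hf : Good f) {u v : Fin 4 → Q} (hu : qf u = 0) (hu0 : u ≠ 0)
    (hind : ¬∃ c : Q, v = c • u) : ¬∃ c : Q, f v = c • f u := by
  rintro ⟨c, hc⟩
  obtain ⟨s, hs⟩ := psi_onto hf hu hu0 0 c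
  have := psi_spec hf hu hu0 0 s
  rw [hs, hf.zero, zero_add, zero_add, ← hc] at this
  exact hind ⟨s, (hf.inj this).symm⟩

lemma coords_unique {U V : Fin 4 → Q} (hU : U ≠ 0) (hind : ¬∃ c : Q, V = c • U)
    {x₁ y₁ x₂ y₂ : Q} (h : x₁ • U + y₁ • V = x₂ • U + y₂ • V) :
    x₁ = x₂ ∧ y₁ = y₂ := by
  have hy : y₁ = y₂ := by
    by_contra hy
    apply hind
    refine ⟨(x₂ - x₁) / (y₁ - y₂), ?_⟩
    have hyne : y₁ - y₂ ≠ 0 := sub_ne_zero.mpr hy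
    have h2 : (y₁ - y₂) • V = (x₂ - x₁) • U := by
      rw [sub_smul, sub_smul]
      have := congrArg (· - (x₁ • U + y₂ • V)) h
      rw [show x₁ • U + y₁ • V - (x₁ • U + y₂ • V) = y₁ • V - y₂ • V by abel,
        show x₂ • U + y₂ • V - (x₁ • U + y₂ • V) = x₂ • U - x₁ • U by abel] at this
      exact this
    rw [div_eq_inv_mul, ← smul_smul, ← h2, smul_smul, inv_mul_cancel₀ hyne, one_smul]
  refine ⟨?_, hy⟩
  rw [hy] at h
  have h3 : x₁ • U = x₂ • U := by
    have := congrArg (· - y₂ • V) h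
    simpa using this
  exact smul_coeff_unique hU h3

/-- invariance of psi under steps in an independent null direction -/
lemma psi_vstep (hf : Good f) {u v : Fin 4 → Q} (hu : qf u = 0) (hu0 : u ≠ 0)
    (hv : qf v = 0) (hv0 : v ≠ 0) (hind : ¬∃ c : Q, v = c • u)
    (p : Fin 4 → Q) (t s : Q) : psi f (p + t • v) u s = psi f p u s := by
  have E1 : f (p + s • u + t • v) = f p + psi f p u s • f u + psi f (p + s • u) v t • f v := by
    rw [show p + s • u + t • v = (p + s • u) + t • v from rfl,
      psi_spec hf hv hv0 (p + s • u) t, psi_spec hf hu hu0 p s]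
  have E2 : f (p + s • u + t • v) = f p + psi f p v t • f v + psi f (p + t • v) u s • f u := by
    rw [show p + s • u + t • v = (p + t • v) + s • u by abel,
      psi_spec hf hu hu0 (p + t • v) s, psi_spec hf hv hv0 p t]
  have h := E1.symm.trans E2
  have h2 : psi f p u s • f u + psi f (p + s • u) v t • f v
      = psi f (p + t • v) u s • f u + psi f p v t • f v := by
    have := congrArg (· - f p) h
    rw [show f p + psi f p u s • f u + psi f (p + s • u) v t • f v - f p
        = psi f p u s • f u + psi f (p + s • u) v t • f v by abel,
      show f p + psi f p v t • f v + psi f (p + t • v) u s • f u - f p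
        = psi f (p + t • v) u s • f u + psi f p v t • f v by abel] at this
    exact this
  exact ((coords_unique (hf.ne_zero_of hu0) (indepImages hf hu hu0 hind) h2).1).symm


lemma notpar_of_par {u a b : Fin 4 → Q} (ha3 : a 3 = 1) (hb3 : b 3 = 1)
    (hne : b ≠ a) (hpar : ∃ c : Q, a = c • u) : ¬∃ c : Q, b = c • u := by
  rintro ⟨c', hc'⟩
  obtain ⟨c, hc⟩ := hpar
  have hc0 : c ≠ 0 := by
    intro h
    rw [h, zero_smul] at hc
    rw [hc] at ha3
    simp at ha3
  have hu : u = c⁻¹ • a := by rw [hc, smul_smul, inv_mul_cancel₀ hc0, one_smul]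
  rw [hu, smul_smul] at hc'
  have h3 := congrFun hc' 3
  rw [hb3] at h3
  simp only [smul_app, ha3, mul_one] at h3
  apply hne
  rw [hc', ← h3, one_smul]
lemma m2_ne_m1 : (m2 : Fin 4 → Q) ≠ m1 := by
  intro h; have := congrFun h 0; norm_num [m2, m1] at this
lemma m3_ne_m1 : (m3 : Fin 4 → Q) ≠ m1 := by
  intro h; have := congrFun h 0; norm_num [m3, m1] at this
lemma m4_ne_m1 : (m4 : Fin 4 → Q) ≠ m1 := by
  intro h; have := congrFun h 0; norm_num [m4, m1] at this
lemma m5_ne_m1 : (m5 : Fin 4 → Q) ≠ m1 := by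
  intro h; have := congrFun h 0; norm_num [m5, m1] at this
lemma m6_ne_m1 : (m6 : Fin 4 → Q) ≠ m1 := by
  intro h; have := congrFun h 0; norm_num [m6, m1] at this
lemma m3_ne_m2 : (m3 : Fin 4 → Q) ≠ m2 := by
  intro h; have := congrFun h 0; norm_num [m3, m2] at this
lemma m4_ne_m2 : (m4 : Fin 4 → Q) ≠ m2 := by
  intro h; have := congrFun h 0; norm_num [m4, m2] at this
lemma m5_ne_m2 : (m5 : Fin 4 → Q) ≠ m2 := by
  intro h; have := congrFun h 0; norm_num [m5, m2] at this
lemma m6_ne_m2 : (m6 : Fin 4 → Q) ≠ m2 := by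
  intro h; have := congrFun h 0; norm_num [m6, m2] at this
lemma m4_ne_m3 : (m4 : Fin 4 → Q) ≠ m3 := by
  intro h; have := congrFun h 1; norm_num [m4, m3] at this
lemma m5_ne_m3 : (m5 : Fin 4 → Q) ≠ m3 := by
  intro h; have := congrFun h 1; norm_num [m5, m3] at this
lemma m6_ne_m3 : (m6 : Fin 4 → Q) ≠ m3 := by
  intro h; have := congrFun h 1; norm_num [m6, m3] at this
lemma m5_ne_m4 : (m5 : Fin 4 → Q) ≠ m4 := by
  intro h; have := congrFun h 1; norm_num [m5, m4] at this
lemma m6_ne_m4 : (m6 : Fin 4 → Q) ≠ m4 := by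
  intro h; have := congrFun h 1; norm_num [m6, m4] at this
lemma m6_ne_m5 : (m6 : Fin 4 → Q) ≠ m5 := by
  intro h; have := congrFun h 2; norm_num [m6, m5] at this
lemma m1_t : (m1 : Fin 4 → Q) 3 = 1 := by simp [m1]
lemma m2_t : (m2 : Fin 4 → Q) 3 = 1 := by simp [m2]
lemma m3_t : (m3 : Fin 4 → Q) 3 = 1 := by simp [m3]
lemma m4_t : (m4 : Fin 4 → Q) 3 = 1 := by simp [m4]
lemma m5_t : (m5 : Fin 4 → Q) 3 = 1 := by simp [m5]
lemma m6_t : (m6 : Fin 4 → Q) 3 = 1 := by simp [m6]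

lemma psi_step5 (hf : Good f) {u : Fin 4 → Q} (hu : qf u = 0) (hu0 : u ≠ 0)
    {w1 w2 w3 w4 w5 : Fin 4 → Q}
    (q1 : qf w1 = 0) (n1 : w1 ≠ 0) (i1 : ¬∃ c : Q, w1 = c • u)
    (q2 : qf w2 = 0) (n2 : w2 ≠ 0) (i2 : ¬∃ c : Q, w2 = c • u)
    (q3 : qf w3 = 0) (n3 : w3 ≠ 0) (i3 : ¬∃ c : Q, w3 = c • u)
    (q4 : qf w4 = 0) (n4 : w4 ≠ 0) (i4 : ¬∃ c : Q, w4 = c • u)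
    (q5 : qf w5 = 0) (n5 : w5 ≠ 0) (i5 : ¬∃ c : Q, w5 = c • u)
    (p : Fin 4 → Q) (t1 t2 t3 t4 t5 s : Q) :
    psi f (p + t1 • w1 + t2 • w2 + t3 • w3 + t4 • w4 + t5 • w5) u s = psi f p u s := by
  rw [show p + t1 • w1 + t2 • w2 + t3 • w3 + t4 • w4 + t5 • w5
      = ((((p + t1 • w1) + t2 • w2) + t3 • w3) + t4 • w4) + t5 • w5 from rfl,
    psi_vstep hf hu hu0 q5 n5 i5, psi_vstep hf hu hu0 q4 n4 i4,
    psi_vstep hf hu hu0 q3 n3 i3, psi_vstep hf hu hu0 q2 n2 i2,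
    psi_vstep hf hu hu0 q1 n1 i1]
lemma decomp1 (p q : Fin 4 → Q) :
    q = p + (-(q 0 - p 0)) • (m2 : Fin 4 → Q) + ((q 1 - p 1)/2 + (((q 3 - p 3) + (q 0 - p 0))/2)) • (m3 : Fin 4 → Q) + (-(q 1 - p 1)/2 + (((q 3 - p 3) + (q 0 - p 0))/2)) • (m4 : Fin 4 → Q) + ((q 2 - p 2)/2) • (m5 : Fin 4 → Q) + (-(q 2 - p 2)/2) • (m6 : Fin 4 → Q) := by
  refine vec_ext ?_ ?_ ?_ ?_ <;> simp [m2, m3, m4, m5, m6] <;> ring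
lemma decomp2 (p q : Fin 4 → Q) :
    q = p + ((q 0 - p 0)) • (m1 : Fin 4 → Q) + ((q 1 - p 1)/2 + (((q 3 - p 3) - (q 0 - p 0))/2)) • (m3 : Fin 4 → Q) + (-(q 1 - p 1)/2 + (((q 3 - p 3) - (q 0 - p 0))/2)) • (m4 : Fin 4 → Q) + ((q 2 - p 2)/2) • (m5 : Fin 4 → Q) + (-(q 2 - p 2)/2) • (m6 : Fin 4 → Q) := by
  refine vec_ext ?_ ?_ ?_ ?_ <;> simp [m1, m3, m4, m5, m6] <;> ring
lemma decomp3 (p q : Fin 4 → Q) :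
    q = p + ((q 0 - p 0)/2 + (((q 3 - p 3) + (q 1 - p 1))/2)) • (m1 : Fin 4 → Q) + (-(q 0 - p 0)/2 + (((q 3 - p 3) + (q 1 - p 1))/2)) • (m2 : Fin 4 → Q) + (-(q 1 - p 1)) • (m4 : Fin 4 → Q) + ((q 2 - p 2)/2) • (m5 : Fin 4 → Q) + (-(q 2 - p 2)/2) • (m6 : Fin 4 → Q) := by
  refine vec_ext ?_ ?_ ?_ ?_ <;> simp [m1, m2, m4, m5, m6] <;> ring
lemma decomp4 (p q : Fin 4 → Q) :
    q = p + ((q 0 - p 0)/2 + (((q 3 - p 3) - (q 1 - p 1))/2)) • (m1 : Fin 4 → Q) + (-(q 0 - p 0)/2 + (((q 3 - p 3) - (q 1 - p 1))/2)) • (m2 : Fin 4 → Q) + ((q 1 - p 1)) • (m3 : Fin 4 → Q) + ((q 2 - p 2)/2) • (m5 : Fin 4 → Q) + (-(q 2 - p 2)/2) • (m6 : Fin 4 → Q) := by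
  refine vec_ext ?_ ?_ ?_ ?_ <;> simp [m1, m2, m3, m5, m6] <;> ring
lemma decomp5 (p q : Fin 4 → Q) :
    q = p + ((q 0 - p 0)/2 + (((q 3 - p 3) + (q 2 - p 2))/2)) • (m1 : Fin 4 → Q) + (-(q 0 - p 0)/2 + (((q 3 - p 3) + (q 2 - p 2))/2)) • (m2 : Fin 4 → Q) + ((q 1 - p 1)/2) • (m3 : Fin 4 → Q) + (-(q 1 - p 1)/2) • (m4 : Fin 4 → Q) + (-(q 2 - p 2)) • (m6 : Fin 4 → Q) := by
  refine vec_ext ?_ ?_ ?_ ?_ <;> simp [m1, m2, m3, m4, m6] <;> ring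
lemma decomp6 (p q : Fin 4 → Q) :
    q = p + ((q 0 - p 0)/2 + (((q 3 - p 3) - (q 2 - p 2))/2)) • (m1 : Fin 4 → Q) + (-(q 0 - p 0)/2 + (((q 3 - p 3) - (q 2 - p 2))/2)) • (m2 : Fin 4 → Q) + ((q 1 - p 1)/2) • (m3 : Fin 4 → Q) + (-(q 1 - p 1)/2) • (m4 : Fin 4 → Q) + ((q 2 - p 2)) • (m5 : Fin 4 → Q) := by
  refine vec_ext ?_ ?_ ?_ ?_ <;> simp [m1, m2, m3, m4, m5] <;> ring

lemma psi_base (hf : Good f) {u : Fin 4 → Q} (hu : qf u = 0) (hu0 : u ≠ 0)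
    (p q : Fin 4 → Q) (s : Q) : psi f q u s = psi f p u s := by
  by_cases c1 : ∃ c : Q, (m1 : Fin 4 → Q) = c • u
  · rw [decomp1 p q]
    exact psi_step5 hf hu hu0 qf_m2 m2_ne (notpar_of_par m1_t m2_t m2_ne_m1 c1) qf_m3 m3_ne (notpar_of_par m1_t m3_t m3_ne_m1 c1) qf_m4 m4_ne (notpar_of_par m1_t m4_t m4_ne_m1 c1) qf_m5 m5_ne (notpar_of_par m1_t m5_t m5_ne_m1 c1) qf_m6 m6_ne (notpar_of_par m1_t m6_t m6_ne_m1 c1) p _ _ _ _ _ s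
  by_cases c2 : ∃ c : Q, (m2 : Fin 4 → Q) = c • u
  · rw [decomp2 p q]
    exact psi_step5 hf hu hu0 qf_m1 m1_ne (notpar_of_par m2_t m1_t (Ne.symm m2_ne_m1) c2) qf_m3 m3_ne (notpar_of_par m2_t m3_t m3_ne_m2 c2) qf_m4 m4_ne (notpar_of_par m2_t m4_t m4_ne_m2 c2) qf_m5 m5_ne (notpar_of_par m2_t m5_t m5_ne_m2 c2) qf_m6 m6_ne (notpar_of_par m2_t m6_t m6_ne_m2 c2) p _ _ _ _ _ s
  by_cases c3 : ∃ c : Q, (m3 : Fin 4 → Q) = c • u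
  · rw [decomp3 p q]
    exact psi_step5 hf hu hu0 qf_m1 m1_ne (notpar_of_par m3_t m1_t (Ne.symm m3_ne_m1) c3) qf_m2 m2_ne (notpar_of_par m3_t m2_t (Ne.symm m3_ne_m2) c3) qf_m4 m4_ne (notpar_of_par m3_t m4_t m4_ne_m3 c3) qf_m5 m5_ne (notpar_of_par m3_t m5_t m5_ne_m3 c3) qf_m6 m6_ne (notpar_of_par m3_t m6_t m6_ne_m3 c3) p _ _ _ _ _ s
  by_cases c4 : ∃ c : Q, (m4 : Fin 4 → Q) = c • u
  · rw [decomp4 p q]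
    exact psi_step5 hf hu hu0 qf_m1 m1_ne (notpar_of_par m4_t m1_t (Ne.symm m4_ne_m1) c4) qf_m2 m2_ne (notpar_of_par m4_t m2_t (Ne.symm m4_ne_m2) c4) qf_m3 m3_ne (notpar_of_par m4_t m3_t (Ne.symm m4_ne_m3) c4) qf_m5 m5_ne (notpar_of_par m4_t m5_t m5_ne_m4 c4) qf_m6 m6_ne (notpar_of_par m4_t m6_t m6_ne_m4 c4) p _ _ _ _ _ s
  by_cases c5 : ∃ c : Q, (m5 : Fin 4 → Q) = c • u
  · rw [decomp5 p q]
    exact psi_step5 hf hu hu0 qf_m1 m1_ne (notpar_of_par m5_t m1_t (Ne.symm m5_ne_m1) c5) qf_m2 m2_ne (notpar_of_par m5_t m2_t (Ne.symm m5_ne_m2) c5) qf_m3 m3_ne (notpar_of_par m5_t m3_t (Ne.symm m5_ne_m3) c5) qf_m4 m4_ne (notpar_of_par m5_t m4_t (Ne.symm m5_ne_m4) c5) qf_m6 m6_ne (notpar_of_par m5_t m6_t m6_ne_m5 c5) p _ _ _ _ _ s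
  by_cases c6 : ∃ c : Q, (m6 : Fin 4 → Q) = c • u
  · rw [decomp6 p q]
    exact psi_step5 hf hu hu0 qf_m1 m1_ne (notpar_of_par m6_t m1_t (Ne.symm m6_ne_m1) c6) qf_m2 m2_ne (notpar_of_par m6_t m2_t (Ne.symm m6_ne_m2) c6) qf_m3 m3_ne (notpar_of_par m6_t m3_t (Ne.symm m6_ne_m3) c6) qf_m4 m4_ne (notpar_of_par m6_t m4_t (Ne.symm m6_ne_m4) c6) qf_m5 m5_ne (notpar_of_par m6_t m5_t (Ne.symm m6_ne_m5) c6) p _ _ _ _ _ s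
  · rw [decomp1 p q]
    exact psi_step5 hf hu hu0 qf_m2 m2_ne c2 qf_m3 m3_ne c3 qf_m4 m4_ne c4 qf_m5 m5_ne c5 qf_m6 m6_ne c6 p _ _ _ _ _ s

lemma Fstep (hf : Good f) {m : Fin 4 → Q} (hm : qf m = 0) (hm0 : m ≠ 0)
    (p d : Fin 4 → Q) (t : Q) :
    f ((p + t • m) + d) - f (p + t • m) = f (p + d) - f p := by
  rw [show (p + t • m) + d = (p + d) + t • m by abel,
    psi_spec hf hm hm0 (p + d) t, psi_spec hf hm hm0 p t,
    psi_base hf hm hm0 p (p + d)]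
  abel

lemma delta_base (hf : Good f) (p q d : Fin 4 → Q) :
    f (q + d) - f q = f (p + d) - f p := by
  rw [decomp1 p q, Fstep hf qf_m6 m6_ne, Fstep hf qf_m5 m5_ne,
    Fstep hf qf_m4 m4_ne, Fstep hf qf_m3 m3_ne, Fstep hf qf_m2 m2_ne]

lemma f_add (hf : Good f) (a b : Fin 4 → Q) : f (a + b) = f a + f b := by
  have h := delta_base hf 0 a b
  rw [zero_add, hf.zero, sub_zero] at h
  rw [sub_eq_iff_eq_add] at h
  rw [h]; abel

lemma f_neg (hf : Good f) (a : Fin 4 → Q) : f (-a) = - f a := by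
  have h := f_add hf a (-a)
  rw [add_neg_cancel, hf.zero] at h
  exact eq_neg_of_add_eq_zero_right h.symm

lemma f_smul_null (hf : Good f) {u : Fin 4 → Q} (hu : qf u = 0) (hu0 : u ≠ 0) (s : Q) :
    f (s • u) = psi f 0 u s • f u := by
  have := psi_spec hf hu hu0 0 s
  rwa [zero_add, hf.zero, zero_add] at this

lemma phi_add (hf : Good f) {u : Fin 4 → Q} (hu : qf u = 0) (hu0 : u ≠ 0) (s t : Q) :
    psi f 0 u (s + t) = psi f 0 u s + psi f 0 u t := by
  have h1 : f ((s + t) • u) = (psi f 0 u s + psi f 0 u t) • f u := by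
    rw [add_smul, f_add hf, f_smul_null hf hu hu0, f_smul_null hf hu hu0, add_smul]
  rw [f_smul_null hf hu hu0] at h1
  exact smul_coeff_unique (hf.ne_zero_of hu0) h1

lemma phi_sub (hf : Good f) {u : Fin 4 → Q} (hu : qf u = 0) (hu0 : u ≠ 0) (s t : Q) :
    psi f 0 u (s - t) = psi f 0 u s - psi f 0 u t := by
  have := phi_add hf hu hu0 (s - t) t
  rw [sub_add_cancel] at this
  linarith

lemma qf_sum3 (u v w : Fin 4 → Q) (a b : Q) :
    qf (a • u + b • v + w) = a^2 * qf u + b^2 * qf v + qf w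
      + 2*a*b*ip u v + 2*a*ip u w + 2*b*ip v w := by
  simp [qf, ip]; ring

lemma A_ne (hf : Good f) {u v : Fin 4 → Q} (hu : qf u = 0) (hu0 : u ≠ 0)
    (hv : qf v = 0) (hv0 : v ≠ 0) (hind : ¬∃ c : Q, v = c • u) :
    ip (f u) (f v) ≠ 0 := by
  intro h
  obtain ⟨c, hc⟩ := null_orth_dep (hf.null_of hu) (hf.null_of hv) h (hf.ne_zero_of hu0)
  exact indepImages hf hu hu0 hind ⟨c, hc⟩

lemma hyper_core (hf : Good f) {u v : Fin 4 → Q} (hu : qf u = 0) (hu0 : u ≠ 0)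
    (hv : qf v = 0) (hv0 : v ≠ 0)
    {w : Fin 4 → Q} (hwu : ip u w = 0) (hwv : ip v w = 0)
    {a b : Q} (hab : a * b * (2 * ip u v) = - qf w) :
    2 * (psi f 0 u a * psi f 0 v b) * ip (f u) (f v) + qf (f w) = 0 := by
  have dom : qf (a • u + b • v + w) = 0 := by
    rw [qf_sum3, hu, hv, hwu, hwv]
    linarith [hab]
  have dom' : qf (a • u + b • v + (-w)) = 0 := by
    rw [qf_sum3, hu, hv]
    have h1 : ip u (-w) = 0 := by
      rw [show -w = (-1 : Q) • w by simp, ip_smul_right, hwu]; ring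
    have h2 : ip v (-w) = 0 := by
      rw [show -w = (-1 : Q) • w by simp, ip_smul_right, hwv]; ring
    rw [h1, h2, qf_neg]
    linarith [hab]
  have img : qf (psi f 0 u a • f u + psi f 0 v b • f v + f w) = 0 := by
    have h := hf.null_of dom
    rw [show a • u + b • v + w = (a • u + b • v) + w from rfl] at h
    rw [f_add hf, f_add hf, f_smul_null hf hu hu0, f_smul_null hf hv hv0] at h
    exact h
  have img' : qf (psi f 0 u a • f u + psi f 0 v b • f v - f w) = 0 := by
    have h := hf.null_of dom'
    rw [show a • u + b • v + (-w) = (a • u + b • v) + (-w) from rfl] at h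
    rw [f_add hf, f_add hf, f_neg hf, f_smul_null hf hu hu0, f_smul_null hf hv hv0] at h
    rw [show psi f 0 u a • f u + psi f 0 v b • f v + -f w
      = psi f 0 u a • f u + psi f 0 v b • f v - f w by abel] at h
    exact h
  rw [qf_sum3, hf.null_of hu, hf.null_of hv] at img
  rw [show psi f 0 u a • f u + psi f 0 v b • f v - f w
      = psi f 0 u a • f u + psi f 0 v b • f v + (-f w) by abel, qf_sum3,
    hf.null_of hu, hf.null_of hv] at img'
  have hq1 : ip (f u) (-f w) = - ip (f u) (f w) := by
    rw [show -f w = (-1 : Q) • f w by simp, ip_smul_right]; ring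
  have hq2 : ip (f v) (-f w) = - ip (f v) (f w) := by
    rw [show -f w = (-1 : Q) • f w by simp, ip_smul_right]; ring
  rw [hq1, hq2, qf_neg] at img'
  linarith [img, img']

lemma hyper_const (hf : Good f) {u v : Fin 4 → Q} (hu : qf u = 0) (hu0 : u ≠ 0)
    (hv : qf v = 0) (hv0 : v ≠ 0) (hind : ¬∃ c : Q, v = c • u)
    {w : Fin 4 → Q} (hwu : ip u w = 0) (hwv : ip v w = 0)
    {a b a' b' : Q} (hab : a * b * (2 * ip u v) = - qf w)
    (hab' : a' * b' * (2 * ip u v) = - qf w) :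
    psi f 0 u a * psi f 0 v b = psi f 0 u a' * psi f 0 v b' := by
  have h1 := hyper_core hf hu hu0 hv hv0 hwu hwv hab
  have h2 := hyper_core hf hu hu0 hv hv0 hwu hwv hab'
  have hA := A_ne hf hu hu0 hv hv0 hind
  have h3 : 2 * (psi f 0 u a * psi f 0 v b) * ip (f u) (f v)
      = 2 * (psi f 0 u a' * psi f 0 v b') * ip (f u) (f v) := by linarith
  have h4 := mul_right_cancel₀ hA h3
  linarith

def w12 : Fin 4 → Q := v4 0 1 0 0
def w13 : Fin 4 → Q := v4 1 1 0 1
def w15 : Fin 4 → Q := v4 1 0 1 1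

lemma ip_m1m2 : ip (m1 : Fin 4 → Q) m2 = -2 := by norm_num [ip, m1, m2]
lemma ip_m1m3 : ip (m1 : Fin 4 → Q) m3 = -1 := by norm_num [ip, m1, m3]
lemma ip_m1m5 : ip (m1 : Fin 4 → Q) m5 = -1 := by norm_num [ip, m1, m5]
lemma qf_w12 : qf (w12 : Fin 4 → Q) = 1 := by norm_num [qf, ip, w12]
lemma qf_w13 : qf (w13 : Fin 4 → Q) = 1 := by norm_num [qf, ip, w13]
lemma qf_w15 : qf (w15 : Fin 4 → Q) = 1 := by norm_num [qf, ip, w15]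
lemma ip_m1w12 : ip (m1 : Fin 4 → Q) w12 = 0 := by norm_num [ip, m1, w12]
lemma ip_m2w12 : ip (m2 : Fin 4 → Q) w12 = 0 := by norm_num [ip, m2, w12]
lemma ip_m1w13 : ip (m1 : Fin 4 → Q) w13 = 0 := by norm_num [ip, m1, w13]
lemma ip_m3w13 : ip (m3 : Fin 4 → Q) w13 = 0 := by norm_num [ip, m3, w13]
lemma ip_m1w15 : ip (m1 : Fin 4 → Q) w15 = 0 := by norm_num [ip, m1, w15]
lemma ip_m5w15 : ip (m5 : Fin 4 → Q) w15 = 0 := by norm_num [ip, m5, w15]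

lemma np21 : ¬∃ c : Q, (m2 : Fin 4 → Q) = c • m1 :=
  notpar_of_par m1_t m2_t m2_ne_m1 ⟨1, (one_smul _ _).symm⟩
lemma np31 : ¬∃ c : Q, (m3 : Fin 4 → Q) = c • m1 :=
  notpar_of_par m1_t m3_t m3_ne_m1 ⟨1, (one_smul _ _).symm⟩
lemma np51 : ¬∃ c : Q, (m5 : Fin 4 → Q) = c • m1 :=
  notpar_of_par m1_t m5_t m5_ne_m1 ⟨1, (one_smul _ _).symm⟩

lemma phi1_one (hf : Good f) : psi f 0 (m1 : Fin 4 → Q) 1 = 1 := psi_base_one hf qf_m1 m1_ne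
lemma phi2_one (hf : Good f) : psi f 0 (m2 : Fin 4 → Q) 1 = 1 := psi_base_one hf qf_m2 m2_ne
lemma phi3_one (hf : Good f) : psi f 0 (m3 : Fin 4 → Q) 1 = 1 := psi_base_one hf qf_m3 m3_ne
lemma phi5_one (hf : Good f) : psi f 0 (m5 : Fin 4 → Q) 1 = 1 := psi_base_one hf qf_m5 m5_ne

lemma phiM2 (hf : Good f) {q s : Q} (hq : q ≠ 0) (hs : s ≠ 0) :
    psi f 0 m1 s * psi f 0 m2 (q^2/s) = psi f 0 m1 q * psi f 0 m2 q := by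
  refine hyper_const hf qf_m1 m1_ne qf_m2 m2_ne np21 (w := (2*q) • w12) ?_ ?_ ?_ ?_
  · rw [ip_smul_right, ip_m1w12]; ring
  · rw [ip_smul_right, ip_m2w12]; ring
  · rw [ip_m1m2, qf_smul, qf_w12]; field_simp
  · rw [ip_m1m2, qf_smul, qf_w12]; ring

lemma phiM1 (hf : Good f) {s : Q} (hs : s ≠ 0) :
    psi f 0 (m1 : Fin 4 → Q) s * psi f 0 m2 (1/s) = 1 := by
  have h := phiM2 hf one_ne_zero hs
  rw [one_pow, phi1_one hf, phi2_one hf, mul_one] at h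
  exact h

lemma phiM3 (hf : Good f) {q : Q} (hq : q ≠ 0) :
    psi f 0 (m1 : Fin 4 → Q) (q^2) = psi f 0 m1 q * psi f 0 m2 q := by
  have h := phiM2 hf hq (pow_ne_zero 2 hq)
  rw [div_self (pow_ne_zero 2 hq), phi2_one hf, mul_one] at h
  exact h

lemma phi_multsq (hf : Good f) {q r : Q} (hq : q ≠ 0) (hr : r ≠ 0) :
    psi f 0 (m1 : Fin 4 → Q) (q^2*r) = psi f 0 m1 (q^2) * psi f 0 m1 r := by
  have h1 := phiM2 hf hq (mul_ne_zero (pow_ne_zero 2 hq) hr)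
  rw [show q^2/(q^2*r) = 1/r by field_simp] at h1
  rw [← phiM3 hf hq] at h1
  have h2 := phiM1 hf hr
  linear_combination psi f 0 (m1 : Fin 4 → Q) r * h1 - psi f 0 (m1 : Fin 4 → Q) (q^2*r) * h2

lemma phi1_mult (hf : Good f) (x r : Q) :
    psi f 0 (m1 : Fin 4 → Q) (x*r) = psi f 0 m1 x * psi f 0 m1 r := by
  by_cases hr : r = 0
  · subst hr
    rw [mul_zero, psi_zero hf qf_m1 m1_ne, mul_zero]
  have sq : ∀ a : Q, psi f 0 (m1 : Fin 4 → Q) (a^2*r) = psi f 0 m1 (a^2) * psi f 0 m1 r := by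
    intro a
    by_cases ha : a = 0
    · subst ha
      norm_num [psi_zero hf qf_m1 m1_ne]
    · exact phi_multsq hf ha hr
  have hx : x = ((x+1)/2)^2 - ((x-1)/2)^2 := by ring
  have e1 : x * r = ((x+1)/2)^2*r - ((x-1)/2)^2*r := by ring
  rw [e1, phi_sub hf qf_m1 m1_ne, sq, sq, ← sub_mul, ← phi_sub hf qf_m1 m1_ne, ← hx]

lemma phi1_inv_mul (hf : Good f) {x : Q} (hx : x ≠ 0) :
    psi f 0 (m1 : Fin 4 → Q) (1/x) * psi f 0 m1 x = 1 := by
  rw [← phi1_mult hf, one_div, inv_mul_cancel₀ hx, phi1_one hf]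

lemma phi2_eq (hf : Good f) (x : Q) : psi f 0 (m2 : Fin 4 → Q) x = psi f 0 m1 x := by
  by_cases hx : x = 0
  · subst hx; rw [psi_zero hf qf_m2 m2_ne, psi_zero hf qf_m1 m1_ne]
  have h1 := phiM1 hf (one_div_ne_zero hx)
  rw [one_div_one_div] at h1
  have h2 := phi1_inv_mul hf hx
  have hne : psi f 0 (m1 : Fin 4 → Q) (1/x) ≠ 0 :=
    psi_ne_zero hf qf_m1 m1_ne 0 (one_div_ne_zero hx)
  exact mul_left_cancel₀ hne (h1.trans h2.symm)

lemma phi_offaxis (hf : Good f) {v wv : Fin 4 → Q} (hv : qf v = 0) (hv0 : v ≠ 0)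
    (hnp : ¬∃ c : Q, v = c • (m1 : Fin 4 → Q))
    (hipv : ip (m1 : Fin 4 → Q) v = -1) (hw1 : ip (m1 : Fin 4 → Q) wv = 0)
    (hwv : ip v wv = 0) (hqw : qf wv = 1)
    (hone : psi f 0 v 1 = 1) (x : Q) :
    psi f 0 v x = psi f 0 (m1 : Fin 4 → Q) x := by
  by_cases hx : x = 0
  · subst hx; rw [psi_zero hf hv hv0, psi_zero hf qf_m1 m1_ne]
  have inst : psi f 0 (m1 : Fin 4 → Q) (1/(2*x)) * psi f 0 v x
      = psi f 0 m1 (1/2) * psi f 0 v 1 := by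
    refine hyper_const hf qf_m1 m1_ne hv hv0 hnp hw1 hwv ?_ ?_
    · rw [hipv, hqw]; field_simp
    · rw [hipv, hqw]; norm_num
  rw [hone, mul_one] at inst
  have hmul : psi f 0 (m1 : Fin 4 → Q) (1/(2*x))
      = psi f 0 m1 (1/2) * psi f 0 m1 (1/x) := by
    rw [← phi1_mult hf]
    congr 1
    field_simp
  rw [hmul] at inst
  have hhalf : psi f 0 (m1 : Fin 4 → Q) (1/2) ≠ 0 :=
    psi_ne_zero hf qf_m1 m1_ne 0 (one_div_ne_zero two_ne_zero)
  have inst2 : psi f 0 (m1 : Fin 4 → Q) (1/x) * psi f 0 v x = 1 := by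
    have := inst
    rw [mul_assoc] at this
    have h3 := mul_left_cancel₀ hhalf (this.trans (mul_one _).symm)
    exact h3
  have h2 := phi1_inv_mul hf hx
  have hne : psi f 0 (m1 : Fin 4 → Q) (1/x) ≠ 0 :=
    psi_ne_zero hf qf_m1 m1_ne 0 (one_div_ne_zero hx)
  exact mul_left_cancel₀ hne (inst2.trans h2.symm)

lemma phi3_eq (hf : Good f) (x : Q) : psi f 0 (m3 : Fin 4 → Q) x = psi f 0 m1 x :=
  phi_offaxis hf qf_m3 m3_ne np31 ip_m1m3 ip_m1w13 ip_m3w13 qf_w13 (phi3_one hf) x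

lemma phi5_eq (hf : Good f) (x : Q) : psi f 0 (m5 : Fin 4 → Q) x = psi f 0 m1 x :=
  phi_offaxis hf qf_m5 m5_ne np51 ip_m1m5 ip_m1w15 ip_m5w15 qf_w15 (phi5_one hf) x

lemma al_two (hf : Good f) : psi f 0 (m1 : Fin 4 → Q) 2 = 2 := by
  have h := phi_add hf qf_m1 m1_ne 1 1
  rw [phi1_one hf] at h
  norm_num at h
  exact h

lemma al_three (hf : Good f) : psi f 0 (m1 : Fin 4 → Q) 3 = 3 := by
  have h := phi_add hf qf_m1 m1_ne 2 1
  rw [phi1_one hf, al_two hf] at h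
  norm_num at h
  exact h

lemma al_neg (hf : Good f) (x : Q) :
    psi f 0 (m1 : Fin 4 → Q) (-x) = - psi f 0 m1 x := by
  have h := phi_sub hf qf_m1 m1_ne 0 x
  rwa [zero_sub, psi_zero hf qf_m1 m1_ne, zero_sub] at h

lemma al_half (hf : Good f) : psi f 0 (m1 : Fin 4 → Q) (1/2) = 1/2 := by
  have h := phi1_mult hf 2 (1/2)
  norm_num at h
  rw [phi1_one hf, al_two hf] at h
  linarith

lemma al_third (hf : Good f) : psi f 0 (m1 : Fin 4 → Q) (1/3) = 1/3 := by
  have h := phi1_mult hf 3 (1/3)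
  norm_num at h
  rw [phi1_one hf, al_three hf] at h
  linarith

lemma al_mone (hf : Good f) : psi f 0 (m1 : Fin 4 → Q) (-1) = -1 := by
  rw [al_neg hf, phi1_one hf]

lemma al_mtwo (hf : Good f) : psi f 0 (m1 : Fin 4 → Q) (-2) = -2 := by
  rw [al_neg hf, al_two hf]

lemma al_mhalf (hf : Good f) : psi f 0 (m1 : Fin 4 → Q) (-(1/2)) = -(1/2) := by
  rw [al_neg hf, al_half hf]

lemma al_mthird (hf : Good f) : psi f 0 (m1 : Fin 4 → Q) (-(1/3)) = -(1/3) := by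
  rw [al_neg hf, al_third hf]

lemma img_of_dom (hf : Good f) {u v : Fin 4 → Q} (hu : qf u = 0) (hu0 : u ≠ 0)
    (hv : qf v = 0) (hv0 : v ≠ 0) (w : Fin 4 → Q) (s t : Q)
    (hdom : qf (s • u + t • v + w) = 0) :
    qf (psi f 0 u s • f u + psi f 0 v t • f v + f w) = 0 := by
  have h := hf.null_of hdom
  rw [show s • u + t • v + w = (s • u + t • v) + w from rfl] at h
  rwa [f_add hf, f_add hf, f_smul_null hf hu hu0, f_smul_null hf hv hv0] at h

/-- image Gram matrix is proportional to the original one -/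
lemma gram (hf : Good f) :
    ip (f (m1 : Fin 4 → Q)) (f m2) = 2 * ip (f (m3 : Fin 4 → Q)) (f m5)
    ∧ ip (f (m1 : Fin 4 → Q)) (f m3) = ip (f (m3 : Fin 4 → Q)) (f m5)
    ∧ ip (f (m1 : Fin 4 → Q)) (f m5) = ip (f (m3 : Fin 4 → Q)) (f m5)
    ∧ ip (f (m2 : Fin 4 → Q)) (f m3) = ip (f (m3 : Fin 4 → Q)) (f m5)
    ∧ ip (f (m2 : Fin 4 → Q)) (f m5) = ip (f (m3 : Fin 4 → Q)) (f m5) := by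
  have i1 : qf ((-1 : Q) • m1 + (-1 : Q) • m2 + (m3 : Fin 4 → Q)) = 0 := by
    norm_num [qf, ip, m1, m2, m3]
  have i2 : qf ((1 : Q) • m1 + (-(1/3) : Q) • m2 + (m3 : Fin 4 → Q)) = 0 := by
    norm_num [qf, ip, m1, m2, m3]
  have i3 : qf ((1 : Q) • m1 + (-(1/2) : Q) • m3 + (m5 : Fin 4 → Q)) = 0 := by
    norm_num [qf, ip, m1, m3, m5]
  have i4 : qf ((-2 : Q) • m1 + (-2 : Q) • m3 + (m5 : Fin 4 → Q)) = 0 := by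
    norm_num [qf, ip, m1, m3, m5]
  have i5 : qf ((1 : Q) • m2 + (-(1/2) : Q) • m3 + (m5 : Fin 4 → Q)) = 0 := by
    norm_num [qf, ip, m2, m3, m5]
  have i6 : qf ((-2 : Q) • m2 + (-2 : Q) • m3 + (m5 : Fin 4 → Q)) = 0 := by
    norm_num [qf, ip, m2, m3, m5]
  have r1 := img_of_dom hf qf_m1 m1_ne qf_m2 m2_ne _ _ _ i1
  have r2 := img_of_dom hf qf_m1 m1_ne qf_m2 m2_ne _ _ _ i2
  have r3 := img_of_dom hf qf_m1 m1_ne qf_m3 m3_ne _ _ _ i3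
  have r4 := img_of_dom hf qf_m1 m1_ne qf_m3 m3_ne _ _ _ i4
  have r5 := img_of_dom hf qf_m2 m2_ne qf_m3 m3_ne _ _ _ i5
  have r6 := img_of_dom hf qf_m2 m2_ne qf_m3 m3_ne _ _ _ i6
  rw [qf_sum3, hf.null_of qf_m1, hf.null_of qf_m2, hf.null_of qf_m3,
    phi2_eq hf] at r1 r2
  rw [al_mone hf] at r1
  rw [phi1_one hf, al_mthird hf] at r2
  rw [qf_sum3, hf.null_of qf_m1, hf.null_of qf_m3, hf.null_of qf_m5,
    phi3_eq hf] at r3 r4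
  rw [phi1_one hf, al_mhalf hf] at r3
  rw [al_mtwo hf] at r4
  rw [qf_sum3, hf.null_of qf_m2, hf.null_of qf_m3, hf.null_of qf_m5,
    phi2_eq hf, phi3_eq hf] at r5 r6
  rw [phi1_one hf, al_mhalf hf] at r5
  rw [al_mtwo hf] at r6
  refine ⟨by linarith, by linarith, by linarith, by linarith, by linarith⟩

lemma qf_sum4 (X Y Z W : Fin 4 → Q) (a b c d : Q) :
    qf (a • X + b • Y + c • Z + d • W)
      = a^2 * qf X + b^2 * qf Y + c^2 * qf Z + d^2 * qf W
      + 2*a*b*ip X Y + 2*a*c*ip X Z + 2*a*d*ip X W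
      + 2*b*c*ip Y Z + 2*b*d*ip Y W + 2*c*d*ip Z W := by
  simp [qf, ip]; ring

lemma decomp_basis (z : Fin 4 → Q) :
    z = ((z 0 + z 3 - z 1 - z 2)/2) • (m1 : Fin 4 → Q)
      + ((- z 0 + z 3 - z 1 - z 2)/2) • m2 + (z 1) • m3 + (z 2) • m5 := by
  refine vec_ext ?_ ?_ ?_ ?_ <;> simp [m1, m2, m3, m5] <;> ring

/-- the fundamental representation of f -/
lemma f_repr (hf : Good f) (z : Fin 4 → Q) :
    f z = psi f 0 m1 ((z 0 + z 3 - z 1 - z 2)/2) • f m1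
      + psi f 0 m1 ((- z 0 + z 3 - z 1 - z 2)/2) • f m2
      + psi f 0 m1 (z 1) • f m3 + psi f 0 m1 (z 2) • f m5 := by
  conv_lhs => rw [decomp_basis z]
  rw [f_add hf, f_add hf, f_add hf,
    f_smul_null hf qf_m1 m1_ne, f_smul_null hf qf_m2 m2_ne,
    f_smul_null hf qf_m3 m3_ne, f_smul_null hf qf_m5 m5_ne,
    phi2_eq hf, phi3_eq hf, phi5_eq hf]

/-- the global quadratic transformation formula -/
lemma qf_f (hf : Good f) (z : Fin 4 → Q) :
    qf (f z) = (- ip (f (m3 : Fin 4 → Q)) (f m5)) * psi f 0 m1 (qf z) := by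
  obtain ⟨g1, g2, g3, g4, g5⟩ := gram hf
  set t1 := (z 0 + z 3 - z 1 - z 2)/2 with ht1
  set t2 := (- z 0 + z 3 - z 1 - z 2)/2 with ht2
  set t3 := z 1 with ht3
  set t4 := z 2 with ht4
  have hql : qf (f z) = 2*(psi f 0 m1 t1)*(psi f 0 m1 t2)*ip (f (m1:Fin 4 → Q)) (f m2)
      + 2*(psi f 0 m1 t1)*(psi f 0 m1 t3)*ip (f (m1:Fin 4 → Q)) (f m3)
      + 2*(psi f 0 m1 t1)*(psi f 0 m1 t4)*ip (f (m1:Fin 4 → Q)) (f m5)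
      + 2*(psi f 0 m1 t2)*(psi f 0 m1 t3)*ip (f (m2:Fin 4 → Q)) (f m3)
      + 2*(psi f 0 m1 t2)*(psi f 0 m1 t4)*ip (f (m2:Fin 4 → Q)) (f m5)
      + 2*(psi f 0 m1 t3)*(psi f 0 m1 t4)*ip (f (m3:Fin 4 → Q)) (f m5) := by
    rw [f_repr hf z, qf_sum4, hf.null_of qf_m1, hf.null_of qf_m2,
      hf.null_of qf_m3, hf.null_of qf_m5]
    ring
  have hz : qf z = -2*(2*(t1*t2) + t1*t3 + t1*t4 + t2*t3 + t2*t4 + t3*t4) := by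
    rw [ht1, ht2, ht3, ht4]
    simp only [qf, ip]
    ring
  have hal : psi f 0 (m1 : Fin 4 → Q) (qf z)
      = -2*(2*((psi f 0 m1 t1)*(psi f 0 m1 t2))
        + (psi f 0 m1 t1)*(psi f 0 m1 t3) + (psi f 0 m1 t1)*(psi f 0 m1 t4)
        + (psi f 0 m1 t2)*(psi f 0 m1 t3) + (psi f 0 m1 t2)*(psi f 0 m1 t4)
        + (psi f 0 m1 t3)*(psi f 0 m1 t4)) := by
    rw [hz]
    rw [show -2*(2*(t1*t2) + t1*t3 + t1*t4 + t2*t3 + t2*t4 + t3*t4)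
      = (-2) * (2*(t1*t2) + t1*t3 + t1*t4 + t2*t3 + t2*t4 + t3*t4) by ring]
    rw [phi1_mult hf, al_mtwo hf]
    rw [show 2*(t1*t2) + t1*t3 + t1*t4 + t2*t3 + t2*t4 + t3*t4
      = ((((2*(t1*t2) + t1*t3) + t1*t4) + t2*t3) + t2*t4) + t3*t4 by ring]
    rw [phi_add hf qf_m1 m1_ne, phi_add hf qf_m1 m1_ne, phi_add hf qf_m1 m1_ne,
      phi_add hf qf_m1 m1_ne, phi_add hf qf_m1 m1_ne]
    rw [phi1_mult hf 2 (t1*t2), al_two hf, phi1_mult hf t1 t2, phi1_mult hf t1 t3,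
      phi1_mult hf t1 t4, phi1_mult hf t2 t3, phi1_mult hf t2 t4, phi1_mult hf t3 t4]
    try ring
  rw [hql, hal]
  linear_combination (2*(psi f 0 m1 t1 * psi f 0 m1 t2))*g1
    + (2*(psi f 0 m1 t1 * psi f 0 m1 t3))*g2
    + (2*(psi f 0 m1 t1 * psi f 0 m1 t4))*g3
    + (2*(psi f 0 m1 t2 * psi f 0 m1 t3))*g4
    + (2*(psi f 0 m1 t2 * psi f 0 m1 t4))*g5

/-- the scalar map is ±id, hence id -/
lemma alpha_id (hf : Good f) (hpm : ∀ s : Q, (psi f 0 m1 s)^2 = s^2) :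
    ∀ s : Q, psi f 0 (m1 : Fin 4 → Q) s = s := by
  have pm : ∀ s : Q, psi f 0 (m1 : Fin 4 → Q) s = s ∨ psi f 0 (m1 : Fin 4 → Q) s = -s := by
    intro s
    have h := hpm s
    have h2 : (psi f 0 (m1 : Fin 4 → Q) s - s) * (psi f 0 m1 s + s) = 0 := by
      linear_combination h
    rcases mul_eq_zero.mp h2 with h3 | h3
    · left; linarith [sub_eq_zero.mp h3]
    · right; linarith [h3]
  intro s
  rcases pm s with h | h
  · exact h
  by_cases hs : s = 0
  · rw [hs] at h ⊢; simpa using h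
  have hadd := phi_add hf qf_m1 m1_ne s 1
  rw [phi1_one hf, h] at hadd
  rcases pm (s + 1) with h2 | h2
  · rw [hadd] at h2; linarith
  · rw [hadd] at h2
    have : (1 : Q) = -1 := by linarith
    norm_num at this

/-- MAIN abstract theorem, normalized version -/
lemma qf_preserved (hf : Good f)
    (hS : ∀ a b : Fin 4 → Q, a 3 = b 3 → f a 3 = f b 3 → qf (a - b) = qf (f a - f b)) :
    ∀ z : Fin 4 → Q, qf (f z) = qf z := by
  obtain ⟨b1, hb1⟩ := psi_onto hf qf_m1 m1_ne 0 ((f (m1 : Fin 4 → Q)) 3)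
  obtain ⟨b2, hb2⟩ := psi_onto hf qf_m1 m1_ne 0 ((f (m2 : Fin 4 → Q)) 3)
  obtain ⟨b3, hb3⟩ := psi_onto hf qf_m1 m1_ne 0 ((f (m3 : Fin 4 → Q)) 3)
  obtain ⟨b4, hb4⟩ := psi_onto hf qf_m1 m1_ne 0 ((f (m5 : Fin 4 → Q)) 3)
  obtain ⟨T1, T2, T3, T4, hsum0, hsumb, hTne⟩ :
      ∃ T1 T2 T3 T4 : Q, T1 + T2 + T3 + T4 = 0
        ∧ T1*b1 + T2*b2 + T3*b3 + T4*b4 = 0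
        ∧ ¬(T1 = 0 ∧ T2 = 0 ∧ T3 = 0 ∧ T4 = 0) := by
    by_cases hc : b1 = b2 ∧ b2 = b3
    · exact ⟨1, -1, 0, 0, by ring, by rw [hc.1]; ring, by intro h; exact one_ne_zero h.1⟩
    · refine ⟨b2 - b3, b3 - b1, b1 - b2, 0, by ring, by ring, ?_⟩
      rintro ⟨e1, e2, e3, -⟩
      exact hc ⟨by linarith [sub_eq_zero.mp e3], by linarith [sub_eq_zero.mp e1]⟩
  set d : Fin 4 → Q := T1 • m1 + T2 • m2 + T3 • m3 + T4 • m5 with hdd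
  have hd0 : d 0 = T1 - T2 := by simp [hdd, m1, m2, m3, m5]; try ring
  have hd1 : d 1 = T3 := by simp [hdd, m1, m2, m3, m5]; try ring
  have hd2 : d 2 = T4 := by simp [hdd, m1, m2, m3, m5]; try ring
  have hd3 : d 3 = 0 := by
    have : d 3 = T1 + T2 + T3 + T4 := by simp [hdd, m1, m2, m3, m5]
    rw [this, hsum0]
  have hqd : qf d = d 0^2 + d 1^2 + d 2^2 := by
    simp only [qf, ip]
    rw [hd3]; ring
  have hqd_ne : qf d ≠ 0 := by
    intro h
    rw [hqd] at h
    obtain ⟨e0, e1, e2⟩ := sq3_zero h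
    rw [hd0] at e0; rw [hd1] at e1; rw [hd2] at e2
    exact hTne ⟨by linarith, by linarith, e1, e2⟩
  -- time components of images of multiples of d vanish
  have keyt : ∀ s : Q, f (s • d) 3 = 0 := by
    intro s
    have harg1 : ((s • d) 0 + (s • d) 3 - (s • d) 1 - (s • d) 2)/2 = s * T1 := by
      simp only [smul_app]; rw [hd0, hd1, hd2, hd3]; linear_combination (-(s/2)) * hsum0
    have harg2 : (-(s • d) 0 + (s • d) 3 - (s • d) 1 - (s • d) 2)/2 = s * T2 := by
      simp only [smul_app]; rw [hd0, hd1, hd2, hd3]; linear_combination (-(s/2)) * hsum0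
    have harg3 : (s • d) 1 = s * T3 := by simp only [smul_app]; rw [hd1]
    have harg4 : (s • d) 2 = s * T4 := by simp only [smul_app]; rw [hd2]
    have hr := f_repr hf (s • d)
    rw [harg1, harg2, harg3, harg4] at hr
    have h3 := congrFun hr 3
    simp only [add_app, smul_app] at h3
    rw [← hb1, ← hb2, ← hb3, ← hb4] at h3
    rw [← phi1_mult hf (s*T1) b1, ← phi1_mult hf (s*T2) b2,
      ← phi1_mult hf (s*T3) b3, ← phi1_mult hf (s*T4) b4] at h3
    rw [← phi_add hf qf_m1 m1_ne, ← phi_add hf qf_m1 m1_ne,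
      ← phi_add hf qf_m1 m1_ne] at h3
    rw [show s*T1*b1 + s*T2*b2 + s*T3*b3 + s*T4*b4
      = s * (T1*b1 + T2*b2 + T3*b3 + T4*b4) by ring, hsumb, mul_zero,
      psi_zero hf qf_m1 m1_ne] at h3
    rw [h3]
  -- apply the symmetry axiom along multiples of d
  have hE : ∀ s : Q, qf (s • d) = qf (f (s • d)) := by
    intro s
    have h := hS (s • d) 0 (by simp [hd3]) (by rw [keyt s, hf.zero]; simp)
    rwa [sub_zero, hf.zero, sub_zero] at h
  set kk := -ip (f (m3 : Fin 4 → Q)) (f m5) with hkk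
  have hE2 : ∀ s : Q, s^2 * qf d
      = kk * ((psi f 0 m1 s)^2 * psi f 0 m1 (qf d)) := by
    intro s
    have h := hE s
    rw [qf_smul, qf_f hf, ← hkk] at h
    rw [qf_smul] at h
    rw [show s^2 * qf d = s*(s*qf d) by ring, phi1_mult hf s (s * qf d),
      phi1_mult hf s (qf d)] at h
    linear_combination h
  have hE1 : qf d = kk * psi f 0 (m1 : Fin 4 → Q) (qf d) := by
    have h := hE2 1
    rw [phi1_one hf] at h
    simpa using h
  have hpm : ∀ s : Q, (psi f 0 (m1 : Fin 4 → Q) s)^2 = s^2 := by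
    intro s
    have h := hE2 s
    rw [show kk * ((psi f 0 m1 s)^2 * psi f 0 m1 (qf d))
      = (psi f 0 m1 s)^2 * (kk * psi f 0 m1 (qf d)) by ring, ← hE1] at h
    have h2 : (s^2 - (psi f 0 (m1 : Fin 4 → Q) s)^2) * qf d = 0 := by
      linear_combination h
    rcases mul_eq_zero.mp h2 with h3 | h3
    · linarith [sub_eq_zero.mp h3]
    · exact absurd h3 hqd_ne
  have hid := alpha_id hf hpm
  have hk1 : kk = 1 := by
    rw [hid (qf d)] at hE1
    have h2 : kk * qf d = 1 * qf d := by rw [one_mul, ← hE1]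
    exact mul_right_cancel₀ hqd_ne h2
  intro z
  rw [qf_f hf z, ← hkk, hk1, hid (qf z), one_mul]

/-- translation-conjugated version -/
lemma qf_diff_preserved
    (hbij : Function.Bijective f)
    (hnull : ∀ a b : Fin 4 → Q, (qf (a - b) = 0 ↔ qf (f a - f b) = 0))
    (hS : ∀ a b : Fin 4 → Q, a 3 = b 3 → f a 3 = f b 3 → qf (a - b) = qf (f a - f b))
    (a b : Fin 4 → Q) : qf (f a - f b) = qf (a - b) := by
  set g : (Fin 4 → Q) → (Fin 4 → Q) := fun z => f (z + b) - f b with hg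
  have hgdiff : ∀ z1 z2 : Fin 4 → Q, g z1 - g z2 = f (z1 + b) - f (z2 + b) := by
    intro z1 z2; rw [hg]; exact sub_sub_sub_cancel_right _ _ _
  have hgGood : Good g := by
    refine ⟨⟨?_, ?_⟩, ?_, ?_⟩
    · intro z1 z2 h
      have h2 : f (z1 + b) = f (z2 + b) := by
        have := congrArg (· + f b) h
        simpa [hg, sub_add_cancel] using this
      have := hbij.injective h2
      have h4 := congrArg (· - b) this
      simpa using h4
    · intro w
      obtain ⟨a0, ha0⟩ := hbij.surjective (w + f b)
      exact ⟨a0 - b, by rw [hg]; simp only [sub_add_cancel, ha0]; abel⟩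
    · intro z1 z2
      rw [hgdiff]
      have h1 : z1 - z2 = (z1 + b) - (z2 + b) := by abel
      rw [h1]
      exact hnull (z1 + b) (z2 + b)
    · rw [hg]; simp
  have hgS : ∀ z1 z2 : Fin 4 → Q, z1 3 = z2 3 → g z1 3 = g z2 3
      → qf (z1 - z2) = qf (g z1 - g z2) := by
    intro z1 z2 h3 hg3
    have ht : (z1 + b) 3 = (z2 + b) 3 := by simp [h3]
    have hft : f (z1 + b) 3 = f (z2 + b) 3 := by
      have := congrArg (· + f b 3) hg3
      simpa [hg] using this
    have := hS (z1 + b) (z2 + b) ht hft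
    rw [hgdiff, show z1 - z2 = (z1 + b) - (z2 + b) by abel]
    exact this
  have hmain := qf_preserved hgGood hgS (a - b)
  have hga : g (a - b) = f a - f b := by rw [hg]; simp [sub_add_cancel]
  rw [← hga, hmain]

lemma mu_qf (x y : Fin 4 → Q) : mu x y = qf (x - y) := by
  simp only [mu, sp2, tm2, qf, ip, sub_app]
  ring

lemma sp2_iff_qf (x y : Fin 4 → Q) : sp2 x y = tm2 x y ↔ qf (x - y) = 0 := by
  have h : sp2 x y - tm2 x y = qf (x - y) := by
    simp only [sp2, tm2, qf, ip, sub_app]; ring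
  constructor <;> intro h2 <;> linarith

lemma qf_eq_sp2_of_time {x y : Fin 4 → Q} (h : x 3 = y 3) : qf (x - y) = sp2 x y := by
  simp only [sp2, qf, ip, sub_app]
  rw [h]
  ring
end SRproof


theorem mu_absolute {B Q : Type} [Field Q] [LinearOrder Q] [IsStrictOrderedRing Q]
    (IB Ph : B → Prop) (W : B → B → (Fin 4 → Q) → Prop)
    (h : SpecRel IB Ph W)
    (o o' : B) (x y x' y' : Fin 4 → Q)
    (ho : IOb IB W o) (ho' : IOb IB W o')
    (hx : ∀ b, W o b x ↔ W o' b x')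
    (hy : ∀ b, W o b y ↔ W o' b y') :
    mu x y = mu x' y' := by
  classical
  have hEv : ∀ e : Fin 4 → Q, ∃ e', ∀ b, W o b e ↔ W o' b e' := h.axEv o o' ho ho'
  have hEv' : ∀ e' : Fin 4 → Q, ∃ e, ∀ b, W o b e ↔ W o' b e' := by
    intro e'
    obtain ⟨e, he⟩ := h.axEv o' o ho' ho e'
    exact ⟨e, fun b => (he b).symm⟩
  have hnullR : ∀ e1 e1' e2 e2' : Fin 4 → Q,
      (∀ b, W o b e1 ↔ W o' b e1') → (∀ b, W o b e2 ↔ W o' b e2') →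
      (SRproof.qf (e1 - e2) = 0 ↔ SRproof.qf (e1' - e2') = 0) := by
    intro e1 e1' e2 e2' h1 h2
    rw [← SRproof.sp2_iff_qf, ← SRproof.sp2_iff_qf]
    rw [← h.axPh o ho e1 e2, ← h.axPh o' ho' e1' e2']
    constructor
    · rintro ⟨p, hp, hp1, hp2⟩
      exact ⟨p, hp, (h1 p).mp hp1, (h2 p).mp hp2⟩
    · rintro ⟨p, hp, hp1, hp2⟩
      exact ⟨p, hp, (h1 p).mpr hp1, (h2 p).mpr hp2⟩
  choose F hF using hEv
  have hsv : ∀ e a b' : Fin 4 → Q, (∀ b, W o b e ↔ W o' b a) →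
      (∀ b, W o b e ↔ W o' b b') → a = b' := by
    intro e a b' h1 h2
    apply SRproof.cone_sep
    intro c'
    obtain ⟨c, hc⟩ := hEv' c'
    rw [← hnullR e a c c' h1 hc, ← hnullR e b' c c' h2 hc]
  have hinj : Function.Injective F := by
    intro e1 e2 he
    apply SRproof.cone_sep
    intro c
    have h1 := hnullR e1 (F e1) c (F c) (hF e1) (hF c)
    have h2 := hnullR e2 (F e2) c (F c) (hF e2) (hF c)
    rw [he] at h1
    rw [h1, h2]
  have hsurj : Function.Surjective F := by
    intro e'
    obtain ⟨e, he⟩ := hEv' e'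
    exact ⟨e, hsv e (F e) e' (hF e) he⟩
  have hnullF : ∀ a b : Fin 4 → Q,
      (SRproof.qf (a - b) = 0 ↔ SRproof.qf (F a - F b) = 0) := by
    intro a b
    exact hnullR a (F a) b (F b) (hF a) (hF b)
  have hSF : ∀ a b : Fin 4 → Q, a 3 = b 3 → F a 3 = F b 3 →
      SRproof.qf (a - b) = SRproof.qf (F a - F b) := by
    intro a b h3 h3'
    have hs := h.axSymd o o' a b (F a) (F b) ho ho' h3 h3' (hF a) (hF b)
    rw [SRproof.qf_eq_sp2_of_time h3, SRproof.qf_eq_sp2_of_time h3']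
    exact hs
  have hFx : F x = x' := hsv x (F x) x' (hF x) hx
  have hFy : F y = y' := hsv y (F y) y' (hF y) hy
  have hmain := SRproof.qf_diff_preserved ⟨hinj, hsurj⟩ hnullF hSF x y
  rw [SRproof.mu_qf, SRproof.mu_qf, ← hFx, ← hFy, hmain]
end

section
/- In any model of SpecRel, inertial observers move along straight lines uniformly relative to each other: if m and k are inertial observers and W(m,k,x̄), W(m,k,ȳ), W(m,k,z̄) with x₄ < y₄ < z̄₄, then ȳ lies on the line segment through x̄ and z̄, i.e., there is λ ∈ Q with 0 < λ < 1 such that ȳ = x̄ + λ·(z̄ − x̄). -/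
namespace SRAux

variable {Q : Type} [Field Q] [LinearOrder Q] [IsStrictOrderedRing Q]

/-- Minkowski quadratic form on `Fin 4 → Q` (3 space + 1 time). -/
def qf (u : Fin 4 → Q) : Q := u 0 ^ 2 + u 1 ^ 2 + u 2 ^ 2 - u 3 ^ 2

/-- The associated bilinear form. -/
def Bf (u v : Fin 4 → Q) : Q := u 0 * v 0 + u 1 * v 1 + u 2 * v 2 - u 3 * v 3

/-- Null ("lightlike-or-equal") separation. -/
def NN (u v : Fin 4 → Q) : Prop := qf (u - v) = 0

lemma NN_refl (u : Fin 4 → Q) : NN u u := by simp [NN, qf]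

lemma qf_neg (u : Fin 4 → Q) : qf (-u) = qf u := by
  simp only [qf, Pi.neg_apply]; ring

lemma NN_symm {u v : Fin 4 → Q} (h : NN u v) : NN v u := by
  unfold NN at *
  have : v - u = -(u - v) := by abel
  rw [this, qf_neg]; exact h

lemma qf_smul (t : Q) (u : Fin 4 → Q) : qf (t • u) = t ^ 2 * qf u := by
  simp [qf, Pi.smul_apply, smul_eq_mul]; ring

lemma qf_sub_expand (a b : Fin 4 → Q) : qf (a - b) = qf a - 2 * Bf a b + qf b := by
  simp [qf, Bf, Pi.sub_apply]; ring

lemma Bf_comm (a b : Fin 4 → Q) : Bf a b = Bf b a := by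
  simp [Bf]; ring

lemma sum_sq3 {a b c : Q} (h : a ^ 2 + b ^ 2 + c ^ 2 = 0) :
    a = 0 ∧ b = 0 ∧ c = 0 := by
  refine ⟨?_, ?_, ?_⟩ <;> nlinarith [sq_nonneg a, sq_nonneg b, sq_nonneg c]

/-- two null vectors that are `Bf`-orthogonal are parallel. -/
lemma par {u v : Fin 4 → Q} (hu : qf u = 0) (hv : qf v = 0) (hB : Bf u v = 0)
    (hne : u ≠ 0) : ∃ μ : Q, v = μ • u := by
  have e1 : u 0 ^ 2 + u 1 ^ 2 + u 2 ^ 2 = u 3 ^ 2 := by unfold qf at hu; linarith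
  have e2 : v 0 ^ 2 + v 1 ^ 2 + v 2 ^ 2 = v 3 ^ 2 := by unfold qf at hv; linarith
  have e3 : u 0 * v 0 + u 1 * v 1 + u 2 * v 2 = u 3 * v 3 := by
    unfold Bf at hB; linarith
  have hu3 : u 3 ≠ 0 := by
    intro h3
    apply hne
    have h0 : u 0 ^ 2 + u 1 ^ 2 + u 2 ^ 2 = 0 := by rw [h3] at e1; simpa using e1
    obtain ⟨z0, z1, z2⟩ := sum_sq3 h0
    funext i
    fin_cases i <;> simp [pow_eq_zero_iff] at z0 z1 z2 ⊢ <;>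
      first | exact z0 | exact z1 | exact z2 | exact h3
  have key : (u 0 * v 1 - u 1 * v 0) ^ 2 + (u 0 * v 2 - u 2 * v 0) ^ 2 +
      (u 1 * v 2 - u 2 * v 1) ^ 2 = 0 := by
    linear_combination (v 0 ^ 2 + v 1 ^ 2 + v 2 ^ 2) * e1 + u 3 ^ 2 * e2 -
      (u 3 * v 3 + u 0 * v 0 + u 1 * v 1 + u 2 * v 2) * e3
  obtain ⟨c01, c02, c12⟩ := sum_sq3 key
  refine ⟨v 3 / u 3, ?_⟩
  have h0 : u 3 * (v 0 * u 3 - v 3 * u 0) = 0 := by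
    linear_combination (-(v 0)) * e1 + u 0 * e3 - u 1 * c01 - u 2 * c02
  have h1 : u 3 * (v 1 * u 3 - v 3 * u 1) = 0 := by
    linear_combination (-(v 1)) * e1 + u 1 * e3 + u 0 * c01 - u 2 * c12
  have h2 : u 3 * (v 2 * u 3 - v 3 * u 2) = 0 := by
    linear_combination (-(v 2)) * e1 + u 2 * e3 + u 0 * c02 + u 1 * c12
  funext i
  have hc : ∀ w : Q, u 3 * (w * u 3 - v 3 * 0) = 0 → True := fun _ _ => trivial
  fin_cases i <;> simp [Pi.smul_apply, smul_eq_mul]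
  · rcases mul_eq_zero.mp h0 with h | h
    · exact absurd h hu3
    · field_simp; linarith
  · rcases mul_eq_zero.mp h1 with h | h
    · exact absurd h hu3
    · field_simp; linarith
  · rcases mul_eq_zero.mp h2 with h | h
    · exact absurd h hu3
    · field_simp; linarith
  · field_simp

lemma vec_sub_ne {U V : Fin 4 → Q} (h : U ≠ V) : V - U ≠ 0 := by
  intro h0; apply h; funext i
  have := congrFun h0 i; simp [Pi.sub_apply] at this; linarith

lemma smul_cancel_vec {a b : Q} {v : Fin 4 → Q} (hv : v ≠ 0) (h : a • v = b • v) :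
    a = b := by
  obtain ⟨i, hi⟩ := Function.ne_iff.mp hv
  have := congrFun h i
  simp [Pi.smul_apply, smul_eq_mul] at this
  rcases this with h' | h'
  · exact h'
  · exact absurd h' (by simpa using hi)

/-- the set of points null-separated from both ends of a null pair is the line
through them. -/
lemma ls_mem_iff {U V w : Fin 4 → Q} (hN : NN U V) (hne : U ≠ V) :
    (NN w U ∧ NN w V) ↔ ∃ t : Q, w = U + t • (V - U) := by
  have hd0 : V - U ≠ 0 := vec_sub_ne hne
  have hqd : qf (V - U) = 0 := by
    have : V - U = -(U - V) := by abel
    rw [this, qf_neg]; exact hN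
  constructor
  · rintro ⟨h1, h2⟩
    have hwU : qf (w - U) = 0 := h1
    have hwV : qf (w - V) = 0 := h2
    have hsub : w - V = (w - U) - (V - U) := by abel
    rw [hsub, qf_sub_expand] at hwV
    have hB : Bf (V - U) (w - U) = 0 := by
      rw [Bf_comm]; rw [hwU, hqd] at hwV; linarith
    obtain ⟨μ, hμ⟩ := par hqd hwU hB hd0
    exact ⟨μ, by rw [← hμ]; abel⟩
  · rintro ⟨t, rfl⟩
    constructor
    · show qf (U + t • (V - U) - U) = 0
      have : U + t • (V - U) - U = t • (V - U) := by abel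
      rw [this, qf_smul, hqd]; ring
    · show qf (U + t • (V - U) - V) = 0
      have : U + t • (V - U) - V = (t - 1) • (V - U) := by
        rw [sub_smul, one_smul]; abel
      rw [this, qf_smul, hqd]; ring

lemma qf_comb (α β : Q) (u v : Fin 4 → Q) :
    qf (α • u + β • v) = α ^ 2 * qf u + β ^ 2 * qf v + 2 * α * β * Bf u v := by
  simp [qf, Bf, Pi.add_apply, Pi.smul_apply, smul_eq_mul]; ring

/-- a null combination of two nonorthogonal null vectors is a multiple of one. -/
lemma two_null {d1 d2 : Fin 4 → Q} (h1 : qf d1 = 0) (h2 : qf d2 = 0)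
    (hB : Bf d1 d2 ≠ 0) {α β : Q} (h : qf (α • d1 + β • d2) = 0) :
    α = 0 ∨ β = 0 := by
  rw [qf_comb, h1, h2] at h
  have h' : (2 * α) * (β * Bf d1 d2) = 0 := by linear_combination h
  rcases mul_eq_zero.mp h' with h'' | h''
  · left; linarith
  · rcases mul_eq_zero.mp h'' with h3 | h3
    · right; exact h3
    · exact absurd h3 hB

lemma Bf_shift (P d P' : Fin 4 → Q) (t : Q) :
    Bf (P + t • d - P') d = Bf (P - P') d + t * Bf d d := by
  simp [Bf, Pi.add_apply, Pi.sub_apply, Pi.smul_apply, smul_eq_mul]; ring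

lemma Bf_dd (d : Fin 4 → Q) (h : qf d = 0) : Bf d d = 0 := by
  simp [Bf, qf] at *; linarith

/-- key transversal lemma: if every point of the line `P + t d` sees a unique
null partner on `P' + s d'`, the two null directions are orthogonal (hence
parallel). -/
lemma transversal {P d P' d' : Fin 4 → Q} (hd : qf d = 0) (hd' : qf d' = 0)
    (hex : ∀ t : Q, ∃ s : Q, NN (P + t • d) (P' + s • d'))
    (huni : ∀ t s₁ s₂ : Q, NN (P + t • d) (P' + s₁ • d') →
      NN (P + t • d) (P' + s₂ • d') → s₁ = s₂) :
    Bf d d' = 0 := by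
  by_contra hB
  set t0 : Q := Bf (P' - P) d' / Bf d d' with ht0
  obtain ⟨s0, hs0⟩ := hex t0
  have hBA : Bf (P + t0 • d - P') d' = 0 := by
    have expand : Bf (P + t0 • d - P') d' = Bf (P - P') d' + t0 * Bf d d' := by
      simp [Bf, Pi.add_apply, Pi.sub_apply, Pi.smul_apply, smul_eq_mul]; ring
    rw [expand, ht0]
    have hPP : Bf (P - P') d' = -Bf (P' - P) d' := by
      simp [Bf, Pi.sub_apply]; ring
    rw [hPP]
    field_simp
    ring
  have key : ∀ s : Q, qf (P + t0 • d - (P' + s • d')) = qf (P + t0 • d - P') := by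
    intro s
    have hvec : P + t0 • d - (P' + s • d') = (P + t0 • d - P') - s • d' := by abel
    rw [hvec, qf_sub_expand, qf_smul, hd']
    have : Bf (P + t0 • d - P') (s • d') = s * Bf (P + t0 • d - P') d' := by
      simp [Bf, Pi.smul_apply, smul_eq_mul]; ring
    rw [this, hBA]; ring
  have hs1 : NN (P + t0 • d) (P' + (s0 + 1) • d') := by
    show qf _ = 0
    rw [key (s0 + 1)]
    rw [← key s0]
    exact hs0
  have := huni t0 s0 (s0 + 1) hs0 hs1
  linarith

/-- point on the time axis at time `t`. -/
def ax (t : Q) : Fin 4 → Q := fun j => if j = 3 then t else 0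

/-- a null direction with spatial part `(p,q,0)` and time part `1`. -/
def dvec (p q : Q) : Fin 4 → Q :=
  fun j => if j = 0 then p else if j = 1 then q else if j = 3 then 1 else 0

@[simp] lemma ax_0 (t : Q) : ax t 0 = 0 := rfl
@[simp] lemma ax_1 (t : Q) : ax t 1 = 0 := rfl
@[simp] lemma ax_2 (t : Q) : ax t 2 = 0 := rfl
@[simp] lemma ax_3 (t : Q) : ax t 3 = t := rfl
@[simp] lemma dvec_0 (p q : Q) : dvec p q 0 = p := rfl
@[simp] lemma dvec_1 (p q : Q) : dvec p q 1 = q := rfl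
@[simp] lemma dvec_2 (p q : Q) : dvec p q 2 = 0 := rfl
@[simp] lemma dvec_3 (p q : Q) : dvec p q 3 = 1 := rfl

/-- null direction in the third spatial coordinate. -/
def dvec2 : Fin 4 → Q := fun j => if j = 2 then 1 else if j = 3 then 1 else 0

@[simp] lemma dvec2_0 : (dvec2 : Fin 4 → Q) 0 = 0 := rfl
@[simp] lemma dvec2_1 : (dvec2 : Fin 4 → Q) 1 = 0 := rfl
@[simp] lemma dvec2_2 : (dvec2 : Fin 4 → Q) 2 = 1 := rfl
@[simp] lemma dvec2_3 : (dvec2 : Fin 4 → Q) 3 = 1 := rfl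

lemma qf_dvec2 : qf (dvec2 : Fin 4 → Q) = 0 := by simp [qf]

lemma qf_dvec {p q : Q} (hpq : p ^ 2 + q ^ 2 = 1) : qf (dvec p q) = 0 := by
  simp [qf]; linarith

lemma dvec_ne_zero (p q : Q) : dvec p q ≠ 0 := by
  intro h0
  have := congrFun h0 3
  simp at this

lemma ax_add_ne (t : Q) (p q : Q) : ax t ≠ ax t + dvec p q := by
  intro h0
  have := congrFun h0 3
  simp [Pi.add_apply] at this

lemma NN_ax_dvec {p q : Q} (hpq : p ^ 2 + q ^ 2 = 1) (t : Q) :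
    NN (ax t) (ax t + dvec p q) := by
  show qf _ = 0
  have : ax t - (ax t + dvec p q) = -(dvec p q) := by abel
  rw [this, qf_neg, qf_dvec hpq]

lemma ax_add_sub (t : Q) (v : Fin 4 → Q) : ax t + v - ax t = v := by abel

/-- general expansion for the form between two "grid" points. -/
lemma kq2 (p q p' q' t t' r s : Q) :
    qf ((ax t + r • dvec p q) - (ax t' + s • dvec p' q')) =
      (r * p - s * p') ^ 2 + (r * q - s * q') ^ 2 - (t + r - t' - s) ^ 2 := by
  simp [qf, Pi.sub_apply, Pi.add_apply, Pi.smul_apply, smul_eq_mul]; ring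

lemma kq1 (p q t t' r : Q) :
    qf ((ax t + r • dvec p q) - ax t') =
      (r * p) ^ 2 + (r * q) ^ 2 - (t + r - t') ^ 2 := by
  simp [qf, Pi.sub_apply, Pi.add_apply, Pi.smul_apply, smul_eq_mul]

/-- the uniqueness statement on the standard grid lines. -/
lemma kgrid_unique {p q : Q} (hpq : p ^ 2 + q ^ 2 = 1) {t t' : Q} (hne : t ≠ t')
    (r s : Q) (h : NN (ax t + r • dvec p q) (ax t' + s • dvec p q)) :
    s = r + (t - t') / 2 := by
  have h' := h
  unfold NN at h'
  rw [kq2] at h'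
  have hd : t - t' ≠ 0 := sub_ne_zero_of_ne hne
  have key : (t - t') * (2 * (r - s) + (t - t')) = 0 := by
    linear_combination -h' + ((r-s)^2) * hpq
  rcases mul_eq_zero.mp key with h2 | h2
  · exact absurd h2 hd
  · linarith


lemma one_smul_dvec (t p q : Q) : ax t + dvec p q = ax t + (1 : Q) • dvec p q := by
  rw [one_smul]

lemma Rmem1 (p q : Q) (hpq : p ^ 2 + q ^ 2 = 1) (t b : Q) :
    NN (ax t + ((b - t) / 2) • dvec p q) (ax t) := by
  show qf _ = 0
  rw [kq1]
  linear_combination (((b - t) / 2) ^ 2) * hpq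

lemma Rmem2 (p q : Q) (hpq : p ^ 2 + q ^ 2 = 1) (t b : Q) :
    NN (ax t + ((b - t) / 2) • dvec p q) (ax t + dvec p q) := by
  show qf _ = 0
  rw [one_smul_dvec, kq2]
  linear_combination ((((b - t) / 2) - 1) ^ 2) * hpq

lemma Rmem3 (p q : Q) (hpq : p ^ 2 + q ^ 2 = 1) (t b : Q) :
    NN (ax t + ((b - t) / 2) • dvec p q) (ax b) := by
  show qf _ = 0
  rw [kq1]
  linear_combination (((b - t) / 2) ^ 2) * hpq

lemma Rmem4 (p q p' q' : Q) (hpq : p ^ 2 + q ^ 2 = 1) (hp' : p' = -p)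
    (hq' : q' = -q) (t b : Q) :
    NN (ax t + ((b - t) / 2) • dvec p q) (ax b + dvec p' q') := by
  subst hp' hq'
  show qf _ = 0
  rw [one_smul_dvec, kq2]
  linear_combination ((((b - t) / 2) + 1) ^ 2) * hpq

lemma Rmem5 (p q : Q) (hpq : p ^ 2 + q ^ 2 = 1) (t t' b : Q) :
    NN (ax t + ((b - t) / 2) • dvec p q) (ax t' + ((b - t') / 2) • dvec p q) := by
  show qf _ = 0
  rw [kq2]
  linear_combination (((b - t) / 2 - (b - t') / 2) ^ 2) * hpq

lemma R_ne (p q : Q) (hp : p ≠ 0 ∨ q ≠ 0) {t t' b : Q} (hne : t ≠ t') :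
    ax t + ((b - t) / 2) • dvec p q ≠ ax t' + ((b - t') / 2) • dvec p q := by
  intro h0
  have h3 := congrFun h0 3
  simp [Pi.add_apply, Pi.smul_apply, smul_eq_mul] at h3
  apply hne
  linarith

lemma R_ne_ax (p q b t : Q) (hp : p ≠ 0 ∨ q ≠ 0) (hne : t ≠ b) :
    ax t + ((b - t) / 2) • dvec p q ≠ ax b := by
  intro h0
  rcases hp with hp | hp
  · have h := congrFun h0 0
    simp [Pi.add_apply, Pi.smul_apply, smul_eq_mul] at h
    rcases h with h | h
    · exact hne (by linarith)
    · exact hp h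
  · have h := congrFun h0 1
    simp [Pi.add_apply, Pi.smul_apply, smul_eq_mul] at h
    rcases h with h | h
    · exact hne (by linarith)
    · exact hp h



/-- a point is determined by its null cone. -/
lemma cone_rigid {u v : Fin 4 → Q} (h : ∀ w, NN u w ↔ NN v w) : u = v := by
  have hvu : qf (v - u) = 0 := (h u).mp (NN_refl u)
  have test : ∀ w : Fin 4 → Q, qf w = 0 → qf (v - (u + w)) = 0 := by
    intro w hw
    have h1 : NN u (u + w) := by
      show qf _ = 0
      have : u - (u + w) = -w := by abel
      rw [this, qf_neg, hw]
    exact (h (u + w)).mp h1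
  have t1 := test (dvec 1 0) (qf_dvec (by norm_num))
  have t2 := test (dvec (-1) 0) (qf_dvec (by norm_num))
  have t3 := test (dvec 0 1) (qf_dvec (by norm_num))
  have t4 := test dvec2 qf_dvec2
  simp only [qf, Pi.sub_apply, Pi.add_apply, dvec_0, dvec_1, dvec_2, dvec_3,
    dvec2_0, dvec2_1, dvec2_2, dvec2_3] at t1 t2 t3 t4 hvu
  norm_num at t1 t2 t3 t4
  have e03 : v 0 - u 0 = v 3 - u 3 := by linear_combination (hvu - t1) / 2
  have e03' : v 0 - u 0 = -(v 3 - u 3) := by linear_combination (t2 - hvu) / 2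
  have e13 : v 1 - u 1 = v 3 - u 3 := by linear_combination (hvu - t3) / 2
  have e23 : v 2 - u 2 = v 3 - u 3 := by linear_combination (hvu - t4) / 2
  have h3 : u 3 = v 3 := by linarith
  have h0 : u 0 = v 0 := by linarith
  have h1 : u 1 = v 1 := by linarith
  have h2 : u 2 = v 2 := by linarith
  funext i
  fin_cases i
  · exact h0
  · exact h1
  · exact h2
  · exact h3


/-- a bijection of coordinates preserving null separation both ways. -/
structure NIso (Q : Type) [Field Q] [LinearOrder Q] [IsStrictOrderedRing Q] where
  φ : (Fin 4 → Q) → (Fin 4 → Q)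
  ψ : (Fin 4 → Q) → (Fin 4 → Q)
  hφψ : ∀ p, φ (ψ p) = p
  hψφ : ∀ p, ψ (φ p) = p
  hN : ∀ u v, NN (φ u) (φ v) ↔ NN u v

namespace NIso

variable {Q : Type} [Field Q] [LinearOrder Q] [IsStrictOrderedRing Q] (T : NIso Q)

lemma hNψ (u v : Fin 4 → Q) : NN (T.ψ u) (T.ψ v) ↔ NN u v := by
  conv_rhs => rw [← T.hφψ u, ← T.hφψ v]
  exact (T.hN (T.ψ u) (T.ψ v)).symm

lemma φ_inj {u v : Fin 4 → Q} (h : T.φ u = T.φ v) : u = v := by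
  rw [← T.hψφ u, h, T.hψφ v]

lemma ψ_inj {u v : Fin 4 → Q} (h : T.ψ u = T.ψ v) : u = v := by
  rw [← T.hφψ u, h, T.hφψ v]

/-- transport of a null-line membership to the φ-side, in parametric form. -/
lemma mem_line {U V P : Fin 4 → Q} (hNUV : NN U V) (hne : U ≠ V)
    (h1 : NN P U) (h2 : NN P V) :
    ∃ s : Q, T.φ P = T.φ U + s • (T.φ V - T.φ U) := by
  have hN' : NN (T.φ U) (T.φ V) := (T.hN U V).mpr hNUV
  have hne' : T.φ U ≠ T.φ V := fun h => hne (T.φ_inj h)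
  exact (ls_mem_iff hN' hne').mp ⟨(T.hN P U).mpr h1, (T.hN P V).mpr h2⟩

/-- pull a parametric point on a φ-image line back to a parametric point
on the original line. -/
lemma pull_line {U V : Fin 4 → Q} (hNUV : NN U V) (hne : U ≠ V)
    {A : Fin 4 → Q} (h1 : NN A (T.φ U)) (h2 : NN A (T.φ V)) :
    ∃ r : Q, T.ψ A = U + r • (V - U) := by
  have k1 : NN (T.ψ A) U := by
    rw [← T.hψφ U]; exact (T.hNψ A (T.φ U)).mpr h1
  have k2 : NN (T.ψ A) V := by
    rw [← T.hψφ V]; exact (T.hNψ A (T.φ V)).mpr h2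
  exact (ls_mem_iff hNUV hne).mp ⟨k1, k2⟩

/-- images of lines through a common point in genuinely different null
directions cannot be parallel. -/
lemma nopar (P w w' : Fin 4 → Q) (hqw : qf w = 0) (hw : w ≠ 0)
    (hnp : ∀ r : Q, w' ≠ r • w) (ν : Q) :
    T.φ (P + w') - T.φ P ≠ ν • (T.φ (P + w) - T.φ P) := by
  intro hEq
  have hNk : NN P (P + w) := by
    show qf _ = 0
    have : P - (P + w) = -w := by abel
    rw [this, qf_neg, hqw]
  have hnePk : P ≠ P + w := by
    intro hcontra
    apply hw
    funext i
    have := congrFun hcontra i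
    simp [Pi.add_apply] at this
    simp [this]
  have hΔ : qf (T.φ (P + w) - T.φ P) = 0 := by
    have : NN (T.φ (P + w)) (T.φ P) := (T.hN _ _).mpr (NN_symm hNk)
    exact this
  have h1 : NN (T.φ (P + w')) (T.φ P) := by
    show qf _ = 0
    rw [hEq, qf_smul, hΔ]; ring
  have h2 : NN (T.φ (P + w')) (T.φ (P + w)) := by
    show qf _ = 0
    have hvec : T.φ (P + w') - T.φ (P + w) =
        (ν - 1) • (T.φ (P + w) - T.φ P) := by
      rw [sub_smul, one_smul, ← hEq]; abel
    rw [hvec, qf_smul, hΔ]; ring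
  have k1 : NN (P + w') P := (T.hN _ _).mp h1
  have k2 : NN (P + w') (P + w) := (T.hN _ _).mp h2
  obtain ⟨r, hr⟩ := (ls_mem_iff hNk hnePk).mp ⟨k1, k2⟩
  have hvv : P + w - P = w := by abel
  rw [hvv] at hr
  exact hnp r (by rw [← add_right_inj P]; exact hr)

/-- images of two distinct parallel grid lines (same null direction `dvec p q`,
based at axis points) have parallel directions. -/
lemma rowpar (p q : Q) (hpq : p ^ 2 + q ^ 2 = 1) (t t' : Q) (hne : t ≠ t') :
    ∃ μ : Q, μ ≠ 0 ∧
      T.φ (ax t' + dvec p q) - T.φ (ax t') =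
        μ • (T.φ (ax t + dvec p q) - T.φ (ax t)) := by
  set u : Fin 4 → Q := dvec p q with hu
  have hqu : qf u = 0 := qf_dvec hpq
  have hNt : NN (ax t) (ax t + u) := NN_ax_dvec hpq t
  have hNt' : NN (ax t') (ax t' + u) := NN_ax_dvec hpq t'
  have hneax : ax t ≠ ax t + u := ax_add_ne t p q
  have hneax' : ax t' ≠ ax t' + u := ax_add_ne t' p q
  set δ : Fin 4 → Q := T.φ (ax t + u) - T.φ (ax t) with hδdef
  set δ' : Fin 4 → Q := T.φ (ax t' + u) - T.φ (ax t') with hδ'def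
  have hqδ : qf δ = 0 := (T.hN _ _).mpr (NN_symm hNt)
  have hqδ' : qf δ' = 0 := (T.hN _ _).mpr (NN_symm hNt')
  have hδ0 : δ ≠ 0 := by
    rw [hδdef]
    exact vec_sub_ne (fun hh => hneax (T.φ_inj hh))
  have hδ'0 : δ' ≠ 0 := by
    rw [hδ'def]
    exact vec_sub_ne (fun hh => hneax' (T.φ_inj hh))
  -- membership facts about parametric points on the image lines
  have memA : ∀ r : Q, NN (T.φ (ax t) + r • δ) (T.φ (ax t)) ∧
      NN (T.φ (ax t) + r • δ) (T.φ (ax t + u)) := by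
    intro r
    constructor
    · show qf _ = 0
      have : T.φ (ax t) + r • δ - T.φ (ax t) = r • δ := by abel
      rw [this, qf_smul, hqδ]; ring
    · show qf _ = 0
      have : T.φ (ax t) + r • δ - T.φ (ax t + u) = (r - 1) • δ := by
        rw [sub_smul, one_smul, hδdef]; abel
      rw [this, qf_smul, hqδ]; ring
  have memB : ∀ s : Q, NN (T.φ (ax t') + s • δ') (T.φ (ax t')) ∧
      NN (T.φ (ax t') + s • δ') (T.φ (ax t' + u)) := by
    intro s
    constructor
    · show qf _ = 0
      have : T.φ (ax t') + s • δ' - T.φ (ax t') = s • δ' := by abel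
      rw [this, qf_smul, hqδ']; ring
    · show qf _ = 0
      have : T.φ (ax t') + s • δ' - T.φ (ax t' + u) = (s - 1) • δ' := by
        rw [sub_smul, one_smul, hδ'def]; abel
      rw [this, qf_smul, hqδ']; ring
  -- pulled-back parametrisation
  have pullA : ∀ r : Q, ∃ r' : Q,
      T.ψ (T.φ (ax t) + r • δ) = ax t + r' • u := by
    intro r
    obtain ⟨r', hr'⟩ := T.pull_line hNt hneax (memA r).1 (memA r).2
    rw [ax_add_sub] at hr'
    exact ⟨r', hr'⟩
  have pullB : ∀ s : Q, ∃ w : Q,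
      T.ψ (T.φ (ax t') + s • δ') = ax t' + w • u := by
    intro s
    obtain ⟨w, hw⟩ := T.pull_line hNt' hneax' (memB s).1 (memB s).2
    rw [ax_add_sub] at hw
    exact ⟨w, hw⟩
  have hex : ∀ r : Q, ∃ s : Q, NN (T.φ (ax t) + r • δ) (T.φ (ax t') + s • δ') := by
    intro r
    obtain ⟨r', hr'⟩ := pullA r
    set W : Fin 4 → Q := ax t' + (r' + (t - t') / 2) • u with hW
    have hWk : NN (T.ψ (T.φ (ax t) + r • δ)) W := by
      rw [hr', hW, hu]
      show qf _ = 0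
      rw [kq2]
      linear_combination ((r' - (r' + (t - t')/2))^2) * hpq
    have hm : NN (T.φ (ax t) + r • δ) (T.φ W) := by
      have := (T.hN (T.ψ (T.φ (ax t) + r • δ)) W).mpr hWk
      rwa [T.hφψ] at this
    have hW1 : NN W (ax t') := by
      show qf _ = 0
      have : W - ax t' = (r' + (t - t') / 2) • u := by rw [hW]; abel
      rw [this, qf_smul, hqu]; ring
    have hW2 : NN W (ax t' + u) := by
      show qf _ = 0
      have : W - (ax t' + u) = (r' + (t - t') / 2 - 1) • u := by
        rw [sub_smul, one_smul, hW]; abel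
      rw [this, qf_smul, hqu]; ring
    obtain ⟨s, hs⟩ := T.mem_line hNt' hneax' hW1 hW2
    refine ⟨s, ?_⟩
    have : T.φ ((ax t') + u) - T.φ (ax t') = δ' := rfl
    rw [hs] at hm
    exact hm
  have huni : ∀ r s₁ s₂ : Q, NN (T.φ (ax t) + r • δ) (T.φ (ax t') + s₁ • δ') →
      NN (T.φ (ax t) + r • δ) (T.φ (ax t') + s₂ • δ') → s₁ = s₂ := by
    intro r s₁ s₂ h₁ h₂
    obtain ⟨r', hr'⟩ := pullA r
    obtain ⟨w₁, hw₁⟩ := pullB s₁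
    obtain ⟨w₂, hw₂⟩ := pullB s₂
    have k₁ : NN (ax t + r' • u) (ax t' + w₁ • u) := by
      rw [← hr', ← hw₁]
      exact (T.hNψ _ _).mpr h₁
    have k₂ : NN (ax t + r' • u) (ax t' + w₂ • u) := by
      rw [← hr', ← hw₂]
      exact (T.hNψ _ _).mpr h₂
    have e₁ := kgrid_unique hpq hne r' w₁ (by rw [hu] at k₁; exact k₁)
    have e₂ := kgrid_unique hpq hne r' w₂ (by rw [hu] at k₂; exact k₂)
    have hww : w₁ = w₂ := by rw [e₁, e₂]
    have : T.ψ (T.φ (ax t') + s₁ • δ') = T.ψ (T.φ (ax t') + s₂ • δ') := by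
      rw [hw₁, hw₂, hww]
    have hBB := T.ψ_inj this
    have : s₁ • δ' = s₂ • δ' := by
      have := congrArg (fun v => v - T.φ (ax t')) hBB
      simpa [add_sub_cancel_left] using this
    exact smul_cancel_vec hδ'0 this
  have hBf : Bf δ δ' = 0 := transversal hqδ hqδ' hex huni
  obtain ⟨μ, hμ⟩ := par hqδ hqδ' hBf hδ0
  refine ⟨μ, ?_, hμ⟩
  intro h0
  rw [h0, zero_smul] at hμ
  exact hδ'0 hμ

lemma core (a b c : Q) (hab : a ≠ b) (hac : a ≠ c) (hbc : b ≠ c) :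
    ∃ μ : Q, T.φ (ax b) - T.φ (ax a) = μ • (T.φ (ax c) - T.φ (ax a)) := by
  have h10 : (1 : Q) ^ 2 + (0 : Q) ^ 2 = 1 := by norm_num
  have h01 : (0 : Q) ^ 2 + (1 : Q) ^ 2 = 1 := by norm_num
  have hm10 : (-1 : Q) ^ 2 + (0 : Q) ^ 2 = 1 := by norm_num
  have h0m1 : (0 : Q) ^ 2 + (-1 : Q) ^ 2 = 1 := by norm_num
  -- row direction parallelism (grid 0 and grid 1), and column parallelism (grid 0)
  obtain ⟨μ₀, hμ₀ne, hμ₀⟩ := T.rowpar 1 0 h10 a c hac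
  obtain ⟨μ₁, hμ₁ne, hμ₁⟩ := T.rowpar 0 1 h01 a c hac
  obtain ⟨ν₀, hν₀ne, hν₀⟩ := T.rowpar (-1) 0 hm10 a b hab
  -- grid-0 R-points
  have hs₁ := T.mem_line (NN_ax_dvec h10 a) (ax_add_ne a 1 0)
    (Rmem1 1 0 h10 a b) (Rmem2 1 0 h10 a b)
  obtain ⟨s₁, hs₁⟩ := hs₁
  have hr₁ := T.mem_line (NN_ax_dvec hm10 b) (ax_add_ne b (-1) 0)
    (Rmem3 1 0 h10 a b) (Rmem4 1 0 (-1) 0 h10 (by norm_num) (by norm_num) a b)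
  obtain ⟨r₁, hr₁⟩ := hr₁
  have hs₂ := T.mem_line (NN_ax_dvec h10 c) (ax_add_ne c 1 0)
    (Rmem1 1 0 h10 c b) (Rmem2 1 0 h10 c b)
  obtain ⟨s₂, hs₂⟩ := hs₂
  have hr₂ := T.mem_line (NN_ax_dvec hm10 b) (ax_add_ne b (-1) 0)
    (Rmem3 1 0 h10 c b) (Rmem4 1 0 (-1) 0 h10 (by norm_num) (by norm_num) c b)
  obtain ⟨r₂, hr₂⟩ := hr₂
  rw [hμ₀, smul_smul] at hs₂
  -- grid-1 R-points
  have hs₁' := T.mem_line (NN_ax_dvec h01 a) (ax_add_ne a 0 1)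
    (Rmem1 0 1 h01 a b) (Rmem2 0 1 h01 a b)
  obtain ⟨s₁', hs₁'⟩ := hs₁'
  have hr₁' := T.mem_line (NN_ax_dvec h0m1 b) (ax_add_ne b 0 (-1))
    (Rmem3 0 1 h01 a b) (Rmem4 0 1 0 (-1) h01 (by norm_num) (by norm_num) a b)
  obtain ⟨r₁', hr₁'⟩ := hr₁'
  have hs₂' := T.mem_line (NN_ax_dvec h01 c) (ax_add_ne c 0 1)
    (Rmem1 0 1 h01 c b) (Rmem2 0 1 h01 c b)
  obtain ⟨s₂', hs₂'⟩ := hs₂'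
  have hr₂' := T.mem_line (NN_ax_dvec h0m1 b) (ax_add_ne b 0 (-1))
    (Rmem3 0 1 h01 c b) (Rmem4 0 1 0 (-1) h01 (by norm_num) (by norm_num) c b)
  obtain ⟨r₂', hr₂'⟩ := hr₂'
  rw [hμ₁, smul_smul] at hs₂'
  -- distinctness of the image points ⇒ r₁ ≠ r₂
  have hRne : T.φ (ax a + ((b - a) / 2) • dvec 1 0) ≠
      T.φ (ax c + ((b - c) / 2) • dvec 1 0) := by
    intro h0
    exact R_ne 1 0 (Or.inl one_ne_zero) hac (T.φ_inj h0)
  have hr₁₂ : r₁ ≠ r₂ := by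
    intro h0
    apply hRne
    rw [hr₁, hr₂, h0]
  have hRne' : T.φ (ax a + ((b - a) / 2) • dvec 0 1) ≠
      T.φ (ax c + ((b - c) / 2) • dvec 0 1) := by
    intro h0
    exact R_ne 0 1 (Or.inr one_ne_zero) hac (T.φ_inj h0)
  have hr₁₂' : r₁' ≠ r₂' := by
    intro h0
    apply hRne'
    rw [hr₁', hr₂', h0]
  have hc₂ : r₂ - r₁ ≠ 0 := sub_ne_zero_of_ne (Ne.symm hr₁₂)
  have hc₂' : r₂' - r₁' ≠ 0 := sub_ne_zero_of_ne (Ne.symm hr₁₂')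
  -- the two fundamental equations
  have hA : (r₂ - r₁) • (T.φ (ax b) - T.φ (ax a)) =
      (-r₁) • (T.φ (ax c) - T.φ (ax a)) +
      (r₂ * s₁ - r₁ * (s₂ * μ₀)) • (T.φ (ax a + dvec 1 0) - T.φ (ax a)) := by
    funext i
    have e1 := congrFun hs₁ i
    have e1' := congrFun hr₁ i
    have e2 := congrFun hs₂ i
    have e2' := congrFun hr₂ i
    simp only [Pi.add_apply, Pi.sub_apply, Pi.smul_apply, smul_eq_mul] at e1 e1' e2 e2' ⊢
    linear_combination r₂ * e1 - r₂ * e1' - r₁ * e2 + r₁ * e2'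
  have hAy : T.φ (ax b) - T.φ (ax a) =
      ((r₂ - r₁)⁻¹ * (-r₁)) • (T.φ (ax c) - T.φ (ax a)) +
      ((r₂ - r₁)⁻¹ * (r₂ * s₁ - r₁ * (s₂ * μ₀))) •
        (T.φ (ax a + dvec 1 0) - T.φ (ax a)) := by
    have hdiv := congrArg (fun w => (r₂ - r₁)⁻¹ • w) hA
    simp only [smul_add, smul_smul] at hdiv
    rw [inv_mul_cancel₀ hc₂, one_smul] at hdiv
    exact hdiv
  have hB : (r₂' - r₁') • (T.φ (ax b) - T.φ (ax a)) =
      (-r₁') • (T.φ (ax c) - T.φ (ax a)) +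
      (r₂' * s₁' - r₁' * (s₂' * μ₁)) • (T.φ (ax a + dvec 0 1) - T.φ (ax a)) := by
    funext i
    have e1 := congrFun hs₁' i
    have e1' := congrFun hr₁' i
    have e2 := congrFun hs₂' i
    have e2' := congrFun hr₂' i
    simp only [Pi.add_apply, Pi.sub_apply, Pi.smul_apply, smul_eq_mul] at e1 e1' e2 e2' ⊢
    linear_combination r₂' * e1 - r₂' * e1' - r₁' * e2 + r₁' * e2'
  have hBy : T.φ (ax b) - T.φ (ax a) =
      ((r₂' - r₁')⁻¹ * (-r₁')) • (T.φ (ax c) - T.φ (ax a)) +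
      ((r₂' - r₁')⁻¹ * (r₂' * s₁' - r₁' * (s₂' * μ₁))) •
        (T.φ (ax a + dvec 0 1) - T.φ (ax a)) := by
    have hdiv := congrArg (fun w => (r₂' - r₁')⁻¹ • w) hB
    simp only [smul_add, smul_smul] at hdiv
    rw [inv_mul_cancel₀ hc₂', one_smul] at hdiv
    exact hdiv
  -- abbreviations for the coefficients
  by_cases hK0 : (r₂ - r₁)⁻¹ * (r₂ * s₁ - r₁ * (s₂ * μ₀)) = 0
  · refine ⟨(r₂ - r₁)⁻¹ * (-r₁), ?_⟩
    rw [hAy, hK0, zero_smul, add_zero]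
  by_cases hK1 : (r₂' - r₁')⁻¹ * (r₂' * s₁' - r₁' * (s₂' * μ₁)) = 0
  · refine ⟨(r₂' - r₁')⁻¹ * (-r₁'), ?_⟩
    rw [hBy, hK1, zero_smul, add_zero]
  -- now both "vertical" components are nonzero; derive a contradiction
  exfalso
  have hqδ₀ : qf (T.φ (ax a + dvec 1 0) - T.φ (ax a)) = 0 :=
    (T.hN _ _).mpr (NN_symm (NN_ax_dvec h10 a))
  have hqδ₁ : qf (T.φ (ax a + dvec 0 1) - T.φ (ax a)) = 0 :=
    (T.hN _ _).mpr (NN_symm (NN_ax_dvec h01 a))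
  have hδ₀0 : T.φ (ax a + dvec 1 0) - T.φ (ax a) ≠ 0 :=
    vec_sub_ne (fun hh => (ax_add_ne a 1 0) (T.φ_inj hh))
  have hδ₁0 : T.φ (ax a + dvec 0 1) - T.φ (ax a) ≠ 0 :=
    vec_sub_ne (fun hh => (ax_add_ne a 0 1) (T.φ_inj hh))
  have hnp01 : ∀ r : Q, dvec (0:Q) 1 ≠ r • dvec 1 0 := by
    intro r h0
    have h3 := congrFun h0 3
    have hcomp := congrFun h0 0
    simp [Pi.smul_apply, smul_eq_mul] at h3 hcomp
    rw [← h3] at hcomp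
    exact one_ne_zero hcomp.symm
  have hBδ : Bf (T.φ (ax a + dvec 1 0) - T.φ (ax a))
      (T.φ (ax a + dvec 0 1) - T.φ (ax a)) ≠ 0 := by
    intro hB0
    obtain ⟨μ, hμ⟩ := par hqδ₀ hqδ₁ hB0 hδ₀0
    exact T.nopar (ax a) (dvec 1 0) (dvec 0 1) (qf_dvec h10) (dvec_ne_zero 1 0)
      hnp01 μ hμ
  by_cases hT : (r₂ - r₁)⁻¹ * (-r₁) = (r₂' - r₁')⁻¹ * (-r₁')
  · -- equal "horizontal" coefficients ⇒ δ₁ parallel δ₀, contradiction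
    have hKK : ((r₂ - r₁)⁻¹ * (r₂ * s₁ - r₁ * (s₂ * μ₀))) •
        (T.φ (ax a + dvec 1 0) - T.φ (ax a)) =
        ((r₂' - r₁')⁻¹ * (r₂' * s₁' - r₁' * (s₂' * μ₁))) •
        (T.φ (ax a + dvec 0 1) - T.φ (ax a)) := by
      funext i
      have eA := congrFun hAy i
      have eB := congrFun hBy i
      simp only [Pi.add_apply, Pi.sub_apply, Pi.smul_apply, smul_eq_mul] at eA eB ⊢
      rw [hT] at eA
      linarith
    have hμ : T.φ (ax a + dvec 0 1) - T.φ (ax a) =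
        (((r₂' - r₁')⁻¹ * (r₂' * s₁' - r₁' * (s₂' * μ₁)))⁻¹ *
          ((r₂ - r₁)⁻¹ * (r₂ * s₁ - r₁ * (s₂ * μ₀)))) •
        (T.φ (ax a + dvec 1 0) - T.φ (ax a)) := by
      rw [mul_smul, hKK, smul_smul, inv_mul_cancel₀ hK1, one_smul]
    exact T.nopar (ax a) (dvec 1 0) (dvec 0 1) (qf_dvec h10) (dvec_ne_zero 1 0)
      hnp01 _ hμ
  · -- main case
    have hTT : (r₂ - r₁)⁻¹ * (-r₁) - (r₂' - r₁')⁻¹ * (-r₁') ≠ 0 :=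
      sub_ne_zero_of_ne hT
    -- z - x in the (δ₀, δ₁) basis
    have hzx : T.φ (ax c) - T.φ (ax a) =
        (((r₂ - r₁)⁻¹ * (-r₁) - (r₂' - r₁')⁻¹ * (-r₁'))⁻¹ *
          (-((r₂ - r₁)⁻¹ * (r₂ * s₁ - r₁ * (s₂ * μ₀))))) •
          (T.φ (ax a + dvec 1 0) - T.φ (ax a)) +
        (((r₂ - r₁)⁻¹ * (-r₁) - (r₂' - r₁')⁻¹ * (-r₁'))⁻¹ *
          ((r₂' - r₁')⁻¹ * (r₂' * s₁' - r₁' * (s₂' * μ₁)))) •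
          (T.φ (ax a + dvec 0 1) - T.φ (ax a)) := by
      have hpre : ((r₂ - r₁)⁻¹ * (-r₁) - (r₂' - r₁')⁻¹ * (-r₁')) •
          (T.φ (ax c) - T.φ (ax a)) =
          (-((r₂ - r₁)⁻¹ * (r₂ * s₁ - r₁ * (s₂ * μ₀)))) •
            (T.φ (ax a + dvec 1 0) - T.φ (ax a)) +
          ((r₂' - r₁')⁻¹ * (r₂' * s₁' - r₁' * (s₂' * μ₁))) •
            (T.φ (ax a + dvec 0 1) - T.φ (ax a)) := by
        funext i
        have eA := congrFun hAy i
        have eB := congrFun hBy i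
        simp only [Pi.add_apply, Pi.sub_apply, Pi.smul_apply, smul_eq_mul] at eA eB ⊢
        linear_combination eB - eA
      have hdiv := congrArg
        (fun w => ((r₂ - r₁)⁻¹ * (-r₁) - (r₂' - r₁')⁻¹ * (-r₁'))⁻¹ • w) hpre
      simp only [smul_add, smul_smul] at hdiv
      rw [inv_mul_cancel₀ hTT, one_smul] at hdiv
      exact hdiv
    have hNR : NN (ax a + ((b - a) / 2) • dvec 1 0)
        (ax c + ((b - c) / 2) • dvec 1 0) := Rmem5 1 0 h10 a c b
    have hqε : qf (T.φ (ax c + ((b - c) / 2) • dvec 1 0) -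
        T.φ (ax a + ((b - a) / 2) • dvec 1 0)) = 0 := by
      have hNm := (T.hN _ _).mpr hNR
      have h2 : T.φ (ax c + ((b - c) / 2) • dvec 1 0) -
          T.φ (ax a + ((b - a) / 2) • dvec 1 0) =
          -(T.φ (ax a + ((b - a) / 2) • dvec 1 0) -
            T.φ (ax c + ((b - c) / 2) • dvec 1 0)) := by abel
      rw [h2, qf_neg]
      exact hNm
    have hε2 : T.φ (ax c + ((b - c) / 2) • dvec 1 0) -
        T.φ (ax a + ((b - a) / 2) • dvec 1 0) =
        ((((r₂ - r₁)⁻¹ * (-r₁) - (r₂' - r₁')⁻¹ * (-r₁'))⁻¹ *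
          (-((r₂ - r₁)⁻¹ * (r₂ * s₁ - r₁ * (s₂ * μ₀))))) + (s₂ * μ₀ - s₁)) •
          (T.φ (ax a + dvec 1 0) - T.φ (ax a)) +
        (((r₂ - r₁)⁻¹ * (-r₁) - (r₂' - r₁')⁻¹ * (-r₁'))⁻¹ *
          ((r₂' - r₁')⁻¹ * (r₂' * s₁' - r₁' * (s₂' * μ₁)))) •
          (T.φ (ax a + dvec 0 1) - T.φ (ax a)) := by
      funext i
      have e1 := congrFun hs₁ i
      have e2 := congrFun hs₂ i
      have ez := congrFun hzx i
      simp only [Pi.add_apply, Pi.sub_apply, Pi.smul_apply, smul_eq_mul] at e1 e2 ez ⊢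
      linear_combination e2 - e1 + ez
    rw [hε2] at hqε
    have htn := two_null hqδ₀ hqδ₁ hBδ hqε
    have hP1 : ((r₂ - r₁)⁻¹ * (-r₁) - (r₂' - r₁')⁻¹ * (-r₁'))⁻¹ *
        ((r₂' - r₁')⁻¹ * (r₂' * s₁' - r₁' * (s₂' * μ₁))) ≠ 0 :=
      mul_ne_zero (inv_ne_zero hTT) hK1
    have hα : (((r₂ - r₁)⁻¹ * (-r₁) - (r₂' - r₁')⁻¹ * (-r₁'))⁻¹ *
          (-((r₂ - r₁)⁻¹ * (r₂ * s₁ - r₁ * (s₂ * μ₀))))) + (s₂ * μ₀ - s₁) = 0 := by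
      rcases htn with h' | h'
      · exact h'
      · exact absurd h' hP1
    rw [hα, zero_smul, zero_add] at hε2
    have hε1 : T.φ (ax c + ((b - c) / 2) • dvec 1 0) -
        T.φ (ax a + ((b - a) / 2) • dvec 1 0) =
        (r₂ - r₁) • (T.φ (ax b + dvec (-1) 0) - T.φ (ax b)) := by
      funext i
      have e1' := congrFun hr₁ i
      have e2' := congrFun hr₂ i
      simp only [Pi.add_apply, Pi.sub_apply, Pi.smul_apply, smul_eq_mul] at e1' e2' ⊢
      linear_combination e2' - e1'
    have hcη : (r₂ - r₁) • (T.φ (ax b + dvec (-1) 0) - T.φ (ax b)) =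
        (((r₂ - r₁)⁻¹ * (-r₁) - (r₂' - r₁')⁻¹ * (-r₁'))⁻¹ *
          ((r₂' - r₁')⁻¹ * (r₂' * s₁' - r₁' * (s₂' * μ₁)))) •
          (T.φ (ax a + dvec 0 1) - T.φ (ax a)) := by
      rw [← hε1]
      exact hε2
    have hη : T.φ (ax b + dvec (-1) 0) - T.φ (ax b) =
        ((r₂ - r₁)⁻¹ * (((r₂ - r₁)⁻¹ * (-r₁) - (r₂' - r₁')⁻¹ * (-r₁'))⁻¹ *
          ((r₂' - r₁')⁻¹ * (r₂' * s₁' - r₁' * (s₂' * μ₁))))) •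
        (T.φ (ax a + dvec 0 1) - T.φ (ax a)) := by
      have hdiv := congrArg (fun w => (r₂ - r₁)⁻¹ • w) hcη
      simp only [smul_smul] at hdiv
      rw [inv_mul_cancel₀ hc₂, one_smul] at hdiv
      exact hdiv
    have hηa : T.φ (ax a + dvec (-1) 0) - T.φ (ax a) =
        (ν₀⁻¹ * ((r₂ - r₁)⁻¹ * (((r₂ - r₁)⁻¹ * (-r₁) - (r₂' - r₁')⁻¹ * (-r₁'))⁻¹ *
          ((r₂' - r₁')⁻¹ * (r₂' * s₁' - r₁' * (s₂' * μ₁)))))) •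
        (T.φ (ax a + dvec 0 1) - T.φ (ax a)) := by
      have hdiv := congrArg (fun w => ν₀⁻¹ • w) hν₀
      simp only [smul_smul] at hdiv
      rw [inv_mul_cancel₀ hν₀ne, one_smul] at hdiv
      rw [← hdiv, hη, smul_smul]
    have hnp2 : ∀ r : Q, dvec (-1 : Q) (0 : Q) ≠ r • dvec 0 1 := by
      intro r h0
      have hcomp := congrFun h0 0
      simp [Pi.smul_apply, smul_eq_mul] at hcomp
    exact T.nopar (ax a) (dvec 0 1) (dvec (-1) 0) (qf_dvec h01) (dvec_ne_zero 0 1)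
      hnp2 _ hηa

end NIso
end SRAux

theorem inertial_observers_move_uniformly {B Q : Type} [Field Q] [LinearOrder Q] [IsStrictOrderedRing Q]
    (IB Ph : B → Prop) (W : B → B → (Fin 4 → Q) → Prop)
    (h : SpecRel IB Ph W)
    (m k : B) (x y z : Fin 4 → Q)
    (hm : IOb IB W m) (hk : IOb IB W k)
    (hx : W m k x) (hy : W m k y) (hz : W m k z)
    (hxy : x 3 < y 3) (hyz : y 3 < z 3) :
    ∃ l : Q, 0 < l ∧ l < 1 ∧ y = fun i => x i + l * (z i - x i) := by
  classical
  -- event correspondences in both directions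
  have ex1 : ∀ u : Fin 4 → Q, ∃ u', ∀ p, W m p u ↔ W k p u' := h.axEv m k hm hk
  have ex2 : ∀ u' : Fin 4 → Q, ∃ u, ∀ p, W m p u ↔ W k p u' := by
    intro u'
    obtain ⟨u, hu⟩ := h.axEv k m hk hm u'
    exact ⟨u, fun p => (hu p).symm⟩
  have bridge : ∀ u v : Fin 4 → Q, (sp2 u v = tm2 u v) ↔ SRAux.NN u v := by
    intro u v
    unfold sp2 tm2 SRAux.NN SRAux.qf
    simp only [Pi.sub_apply]
    constructor <;> intro hh <;> linarith
  have np : ∀ u u' v v' : Fin 4 → Q, (∀ p, W m p u ↔ W k p u') →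
      (∀ p, W m p v ↔ W k p v') → (SRAux.NN u v ↔ SRAux.NN u' v') := by
    intro u u' v v' hu hv
    rw [← bridge, ← bridge]
    constructor
    · intro hn
      obtain ⟨p, hp1, hp2, hp3⟩ := (h.axPh m hm u v).mpr hn
      exact (h.axPh k hk u' v').mp ⟨p, hp1, (hu p).mp hp2, (hv p).mp hp3⟩
    · intro hn
      obtain ⟨p, hp1, hp2, hp3⟩ := (h.axPh k hk u' v').mpr hn
      exact (h.axPh m hm u v).mp ⟨p, hp1, (hu p).mpr hp2, (hv p).mpr hp3⟩
  choose g hg using ex1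
  choose f hf using ex2
  have rig_m : ∀ u v : Fin 4 → Q, (∀ p, W m p u ↔ W m p v) → u = v := by
    intro u v huv
    apply SRAux.cone_rigid
    intro w
    have h1 : ∀ p, W m p v ↔ W k p (g u) := fun p => (huv p).symm.trans (hg u p)
    exact (np u (g u) w (g w) (hg u) (hg w)).trans
      ((np v (g u) w (g w) h1 (hg w)).symm)
  have rig_k : ∀ u' v' : Fin 4 → Q, (∀ p, W k p u' ↔ W k p v') → u' = v' := by
    intro u' v' huv
    apply SRAux.cone_rigid
    intro w'
    have h1 : ∀ p, W m p (f u') ↔ W k p v' := fun p => (hf u' p).trans (huv p)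
    exact ((np (f u') u' (f w') w' (hf u') (hf w')).symm).trans
      (np (f u') v' (f w') w' h1 (hf w'))
  have hfg : ∀ u, f (g u) = u := by
    intro u
    apply rig_m
    intro p
    exact (hf (g u) p).trans ((hg u p).symm)
  have hgf : ∀ u', g (f u') = u' := by
    intro u'
    apply rig_k
    intro p
    exact ((hg (f u') p).symm).trans (hf u' p)
  have hNf : ∀ u v : Fin 4 → Q, SRAux.NN (f u) (f v) ↔ SRAux.NN u v :=
    fun u v => np (f u) u (f v) v (hf u) (hf v)
  -- the worldview transformation sends the time axis onto the worldline of k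
  have haxis : ∀ w : Fin 4 → Q, W m k w → g w = SRAux.ax ((g w) 3) := by
    intro w hw
    have hkk : W k k (g w) := (hg w k).mp hw
    obtain ⟨h0, h1, h2⟩ := (h.axSelf k hk (g w)).mp hkk
    funext i
    fin_cases i
    · exact h0
    · exact h1
    · exact h2
    · rfl
  have hxa : f (SRAux.ax ((g x) 3)) = x := by
    have hh := hfg x
    rw [haxis x hx] at hh
    exact hh
  have hyb : f (SRAux.ax ((g y) 3)) = y := by
    have hh := hfg y
    rw [haxis y hy] at hh
    exact hh
  have hzc : f (SRAux.ax ((g z) 3)) = z := by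
    have hh := hfg z
    rw [haxis z hz] at hh
    exact hh
  have hneq : ∀ u v : Fin 4 → Q, W m k u → W m k v → u ≠ v →
      (g u) 3 ≠ (g v) 3 := by
    intro u v hu hv huv he
    apply huv
    have hgg : g u = g v := by rw [haxis u hu, haxis v hv, he]
    rw [← hfg u, hgg, hfg]
  have hneab : (g x) 3 ≠ (g y) 3 :=
    hneq x y hx hy (fun he => absurd (congrFun he 3) (ne_of_lt hxy))
  have hneac : (g x) 3 ≠ (g z) 3 :=
    hneq x z hx hz (fun he => absurd (congrFun he 3) (ne_of_lt (lt_trans hxy hyz)))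
  have hnebc : (g y) 3 ≠ (g z) 3 :=
    hneq y z hy hz (fun he => absurd (congrFun he 3) (ne_of_lt hyz))
  obtain ⟨μ, hμ⟩ := SRAux.NIso.core ⟨f, g, hfg, hgf, hNf⟩
    ((g x) 3) ((g y) 3) ((g z) 3) hneab hneac hnebc
  have hμ' : f (SRAux.ax ((g y) 3)) - f (SRAux.ax ((g x) 3)) =
      μ • (f (SRAux.ax ((g z) 3)) - f (SRAux.ax ((g x) 3))) := hμ
  rw [hxa, hyb, hzc] at hμ'
  have h3 := congrFun hμ' 3
  simp only [Pi.sub_apply, Pi.smul_apply, smul_eq_mul] at h3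
  refine ⟨μ, ?_, ?_, ?_⟩
  · by_contra hle
    push_neg at hle
    nlinarith [h3]
  · by_contra hge
    push_neg at hge
    nlinarith [h3]
  · funext i
    have hi := congrFun hμ' i
    simp only [Pi.sub_apply, Pi.smul_apply, smul_eq_mul] at hi
    show y i = x i + μ * (z i - x i)
    linarith
end

section
/- The restriction of the induction/supremum scheme IND to the language of ordered fields is equivalent to real-closedness: a linearly ordered field Q in which every nonempty bounded-above subset definable (with parameters) by a first-order formula in the language {+, ·, <} has a least upper bound is a real closed field. -/
open FirstOrder Language

attribute [local instance] FirstOrder.Ring.compatibleRingOfRing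
  FirstOrder.Language.orderStructure

section Aux
variable {Q : Type} [Field Q] [LinearOrder Q] [IsStrictOrderedRing Q]

instance : (Language.ring.sum Language.order).OrderedStructure Q :=
  ⟨fun _ => Iff.rfl⟩

/-- Horner evaluation of a list of coefficients. -/
def evalList (l : List Q) (x : Q) : Q := l.foldr (fun a r => a + x * r) 0

@[simp] lemma evalList_nil (x : Q) : evalList ([] : List Q) x = 0 := rfl
@[simp] lemma evalList_cons (a : Q) (l : List Q) (x : Q) :
    evalList (a :: l) x = a + x * evalList l x := rfl

/-- Term in the language of rings representing Horner evaluation. -/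
def pt : List Q → Language.ring.Term ((↥(Set.univ : Set Q) ⊕ Fin 1) ⊕ Fin 0)
  | [] => 0
  | a :: l => Term.var (Sum.inl (Sum.inl ⟨a, Set.mem_univ a⟩)) +
      Term.var (Sum.inl (Sum.inr 0)) * pt l

lemma realize_pt (l : List Q) (w : Fin 1 → Q) (xs : Fin 0 → Q) :
    Term.realize (L := Language.ring) (Sum.elim (Sum.elim Subtype.val w) xs) (pt l)
      = evalList l (w 0) := by
  induction l with
  | nil => simp [pt]
  | cons a l ih => simp [pt, ih]

lemma definable_lt_zero (l : List Q) :
    (Set.univ : Set Q).Definable₁ (Language.ring.sum Language.order)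
      {x | evalList l x < 0} := by
  rw [Set.Definable₁, Set.definable_iff_exists_formula_sum]
  refine ⟨Term.lt (LHom.sumInl.onTerm (pt l)) (LHom.sumInl.onTerm (0 : Language.ring.Term _)),
    ?_⟩
  ext w
  simp [Formula.Realize, Term.realize_lt, LHom.realize_onTerm, realize_pt]

lemma definable_le_zero (l : List Q) :
    (Set.univ : Set Q).Definable₁ (Language.ring.sum Language.order)
      {x | evalList l x ≤ 0} := by
  rw [Set.Definable₁, Set.definable_iff_exists_formula_sum]
  refine ⟨Term.le (LHom.sumInl.onTerm (pt l)) (LHom.sumInl.onTerm (0 : Language.ring.Term _)),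
    ?_⟩
  ext w
  simp [Formula.Realize, Term.realize_le, LHom.realize_onTerm, realize_pt]

lemma evalList_bound (u : Q) (l : List Q) :
    ∃ B C : Q, 0 ≤ B ∧ 0 ≤ C ∧ ∀ x : Q, |x - u| ≤ 1 →
      |evalList l x| ≤ B ∧ |evalList l x - evalList l u| ≤ C * |x - u| := by
  induction l with
  | nil => exact ⟨0, 0, le_refl _, le_refl _, fun x _ => by simp⟩
  | cons a l ih =>
    obtain ⟨B, C, hB, hC, h⟩ := ih
    refine ⟨|a| + (|u| + 1) * B, (|u| + 1) * C + B, by positivity, by positivity, fun x hx => ?_⟩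
    obtain ⟨h1, h2⟩ := h x hx
    have hxle : |x| ≤ |u| + 1 := by
      have := abs_sub_abs_le_abs_sub x u
      linarith
    have habs := abs_nonneg (x - u)
    constructor
    · calc |a + x * evalList l x| ≤ |a| + |x| * |evalList l x| := by
            rw [← abs_mul]; exact abs_add_le _ _
        _ ≤ |a| + (|u| + 1) * B := by
            have := mul_le_mul hxle h1 (abs_nonneg _) (by positivity)
            linarith
    · have key : (a + x * evalList l x) - (a + u * evalList l u)
          = x * (evalList l x - evalList l u) + (x - u) * evalList l u := by ring
      rw [evalList_cons, evalList_cons, key]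
      calc |x * (evalList l x - evalList l u) + (x - u) * evalList l u|
          ≤ |x| * |evalList l x - evalList l u| + |x - u| * |evalList l u| := by
            rw [← abs_mul, ← abs_mul]; exact abs_add_le _ _
        _ ≤ (|u| + 1) * (C * |x - u|) + |x - u| * B := by
            have e1 := mul_le_mul hxle h2 (abs_nonneg _) (by positivity)
            have e2 := mul_le_mul_of_nonneg_left (h u (by simp)).1 habs
            linarith
        _ = ((|u| + 1) * C + B) * |x - u| := by ring

lemma evalList_neg (l : List Q) (x : Q) :
    evalList (l.map (fun a => -a)) x = -evalList l x := by
  induction l with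
  | nil => simp
  | cons a l ih => simp [ih]; ring

lemma neg_stable (l : List Q) (u : Q) (hu : evalList l u < 0) :
    ∃ δ : Q, 0 < δ ∧ ∀ x, |x - u| ≤ δ → evalList l x < 0 := by
  obtain ⟨B, C, hB, hC, h⟩ := evalList_bound u l
  set f := evalList l u with hf
  have hCpos : (0 : Q) < C + 1 := by linarith
  set d : Q := -f / (C + 1) with hd
  have hdpos : 0 < d := div_pos (by linarith) hCpos
  have hdC : d * (C + 1) = -f := div_mul_cancel₀ _ (ne_of_gt hCpos)
  refine ⟨min 1 d, lt_min one_pos hdpos, fun x hx => ?_⟩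
  have hx1 : |x - u| ≤ 1 := le_trans hx (min_le_left _ _)
  have hxd : |x - u| ≤ d := le_trans hx (min_le_right _ _)
  obtain ⟨-, h2⟩ := h x hx1
  have h3 : evalList l x - f ≤ C * |x - u| := le_trans (le_abs_self _) h2
  have h4 : C * |x - u| ≤ C * d := mul_le_mul_of_nonneg_left hxd hC
  linarith

lemma pos_stable (l : List Q) (u : Q) (hu : 0 < evalList l u) :
    ∃ δ : Q, 0 < δ ∧ ∀ x, |x - u| ≤ δ → 0 < evalList l x := by
  obtain ⟨δ, hδ, h⟩ := neg_stable (l.map (fun a => -a)) u (by rw [evalList_neg]; linarith)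
  exact ⟨δ, hδ, fun x hx => by have := h x hx; rw [evalList_neg] at this; linarith⟩

lemma evalList_map_range (f : ℕ → Q) (x : Q) :
    ∀ k : ℕ, evalList ((List.range k).map f) x = ∑ i ∈ Finset.range k, f i * x ^ i := by
  intro k
  induction k generalizing f with
  | zero => simp
  | succ k ih =>
    rw [List.range_succ_eq_map, Finset.sum_range_succ']
    simp only [List.map_cons, List.map_map, evalList_cons]
    rw [show (f ∘ Nat.succ) = (fun i => f (i + 1)) from rfl, ih (fun i => f (i + 1))]
    rw [Finset.mul_sum]
    simp only [pow_zero, mul_one, pow_succ]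
    rw [add_comm]
    congr 1
    exact Finset.sum_congr rfl (fun i _ => by ring)

lemma eval_eq_evalList (p : Polynomial Q) (x : Q) :
    p.eval x = evalList ((List.range (p.natDegree + 1)).map p.coeff) x := by
  rw [evalList_map_range, Polynomial.eval_eq_sum_range]

lemma eventually_sign (p : Polynomial Q) (hodd : Odd p.natDegree) (ha : 0 < p.leadingCoeff) :
    ∃ M : Q, 1 ≤ M ∧ (∀ x : Q, M ≤ x → 0 < p.eval x) ∧ (∀ x : Q, x ≤ -M → p.eval x < 0) := by
  set n := p.natDegree with hn
  have hn1 : 1 ≤ n := hodd.pos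
  set a := p.leadingCoeff with hadef
  set s : Q := ∑ i ∈ Finset.range n, |p.coeff i| with hs
  have hs0 : 0 ≤ s := Finset.sum_nonneg (fun i _ => abs_nonneg _)
  have heval : ∀ x : Q, p.eval x = (∑ i ∈ Finset.range n, p.coeff i * x ^ i) + a * x ^ n := by
    intro x
    rw [Polynomial.eval_eq_sum_range, Finset.sum_range_succ]
    rfl
  have key : ∀ x : Q, 1 ≤ |x| →
      |∑ i ∈ Finset.range n, p.coeff i * x ^ i| ≤ s * |x| ^ (n - 1) := by
    intro x hx
    calc |∑ i ∈ Finset.range n, p.coeff i * x ^ i|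
        ≤ ∑ i ∈ Finset.range n, |p.coeff i * x ^ i| := Finset.abs_sum_le_sum_abs _ _
      _ ≤ ∑ i ∈ Finset.range n, |p.coeff i| * |x| ^ (n - 1) := by
          refine Finset.sum_le_sum (fun i hi => ?_)
          rw [abs_mul, abs_pow]
          refine mul_le_mul_of_nonneg_left ?_ (abs_nonneg _)
          refine pow_le_pow_right₀ hx ?_
          have := Finset.mem_range.mp hi
          omega
      _ = s * |x| ^ (n - 1) := by rw [← Finset.sum_mul]
  refine ⟨max 1 ((s + 1) / a), le_max_left _ _, fun x hx => ?_, fun x hx => ?_⟩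
  · have hx1 : (1 : Q) ≤ x := le_trans (le_max_left _ _) hx
    have hxabs : |x| = x := abs_of_pos (by linarith)
    have hax : s + 1 ≤ a * x := by
      rw [← div_le_iff₀' ha]
      exact le_trans (le_max_right _ _) hx
    have hpow : (1 : Q) ≤ x ^ (n - 1) := one_le_pow₀ hx1
    have htail := key x (by rw [hxabs]; exact hx1)
    rw [hxabs] at htail
    have hxn : x ^ n = x ^ (n - 1) * x := by
      rw [← pow_succ]
      congr 1
      omega
    have hlow : -(s * x ^ (n - 1)) ≤ ∑ i ∈ Finset.range n, p.coeff i * x ^ i :=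
      neg_le_of_abs_le htail
    rw [heval, hxn]
    nlinarith [mul_le_mul_of_nonneg_left hax (le_trans zero_le_one hpow)]
  · have hM1 : (1 : Q) ≤ max 1 ((s + 1) / a) := le_max_left _ _
    have hx1 : x ≤ -1 := le_trans hx (by linarith)
    have hxabs : |x| = -x := abs_of_neg (by linarith)
    have hax : a * x ≤ -(s + 1) := by
      have : (s + 1) / a ≤ -x := by
        have := le_trans (le_max_right _ _) (by linarith [hx] : max 1 ((s+1)/a) ≤ -x)
        exact this
      have := (div_le_iff₀' ha).mp this
      linarith
    have habs1 : (1 : Q) ≤ |x| := by rw [hxabs]; linarith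
    have hpow : (1 : Q) ≤ |x| ^ (n - 1) := one_le_pow₀ habs1
    have heven : Even (n - 1) := by
      rcases hodd with ⟨k, hk⟩
      exact ⟨k, by omega⟩
    have hxn1 : x ^ (n - 1) = |x| ^ (n - 1) := by
      rw [hxabs]
      exact (heven.neg_pow x).symm
    have htail := key x habs1
    have hup : (∑ i ∈ Finset.range n, p.coeff i * x ^ i) ≤ s * |x| ^ (n - 1) :=
      le_of_abs_le htail
    have hxn : x ^ n = x ^ (n - 1) * x := by
      rw [← pow_succ]; congr 1; omega
    rw [heval, hxn, hxn1]
    nlinarith [mul_le_mul_of_nonneg_left hax (le_trans zero_le_one hpow)]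

end Aux

theorem definable_supremum_implies_real_closed {Q : Type} [Field Q] [LinearOrder Q] [IsStrictOrderedRing Q]
    (hsup : ∀ S : Set Q,
      (Set.univ : Set Q).Definable₁ (Language.ring.sum Language.order) S →
      S.Nonempty → BddAbove S → ∃ u : Q, IsLUB S u) :
    (∀ q : Q, 0 ≤ q → ∃ r : Q, r ^ 2 = q) ∧
    (∀ p : Polynomial Q, Odd p.natDegree → ∃ x : Q, Polynomial.eval x p = 0) := by
  constructor
  · -- square roots
    intro q hq
    set l : List Q := [-q, 0, 1] with hl
    have hev : ∀ x : Q, evalList l x = x * x - q := by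
      intro x; simp [hl]; ring
    set S : Set Q := {x | evalList l x ≤ 0} with hS
    have hmem : ∀ x : Q, x ∈ S ↔ x * x ≤ q := by
      intro x
      simp only [hS, Set.mem_setOf_eq, hev]
      constructor <;> intro <;> linarith
    obtain ⟨r, hr⟩ := hsup S (definable_le_zero l)
      ⟨0, (hmem 0).2 (by linarith)⟩
      ⟨q + 1, fun x hx => by
        have := (hmem x).1 hx
        by_contra hcon
        push_neg at hcon
        nlinarith⟩
    have h0r : 0 ≤ r := hr.1 ((hmem 0).2 (by linarith))
    refine ⟨r, ?_⟩
    rw [pow_two]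
    rcases lt_trichotomy (r * r) q with h | h | h
    · exfalso
      set ε : Q := min 1 ((q - r * r) / (2 * r + 2)) with hε
      have hεpos : 0 < ε := lt_min one_pos (div_pos (by linarith) (by linarith))
      have hε1 : ε ≤ 1 := min_le_left _ _
      have hε2 : ε * (2 * r + 2) ≤ q - r * r := by
        have h2 : ε ≤ (q - r * r) / (2 * r + 2) := min_le_right _ _
        have := (le_div_iff₀ (by linarith : (0:Q) < 2 * r + 2)).mp h2
        linarith
      have hmem2 : r + ε ∈ S := (hmem _).2 (by nlinarith)
      have := hr.1 hmem2
      linarith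
    · exact h
    · exfalso
      have hrpos : 0 < r := by
        rcases lt_or_eq_of_le h0r with h' | h'
        · exact h'
        · exfalso; rw [← h'] at h; simp at h; linarith
      set ε : Q := min r ((r * r - q) / (2 * r)) with hε
      have hεpos : 0 < ε := lt_min hrpos (div_pos (by linarith) (by linarith))
      have hε1 : ε ≤ r := min_le_left _ _
      have hε2 : ε * (2 * r) ≤ r * r - q := by
        have h2 : ε ≤ (r * r - q) / (2 * r) := min_le_right _ _
        have := (le_div_iff₀ (by linarith : (0:Q) < 2 * r)).mp h2
        linarith
      have hub : r - ε ∈ upperBounds S := by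
        intro y hy
        have hyq := (hmem y).1 hy
        by_contra hcon
        push_neg at hcon
        have h1 : 0 ≤ r - ε := by linarith
        nlinarith
      have := hr.2 hub
      linarith
  · -- odd degree polynomials
    have aux : ∀ p : Polynomial Q, Odd p.natDegree → 0 < p.leadingCoeff →
        ∃ x : Q, Polynomial.eval x p = 0 := by
      intro p hodd ha
      obtain ⟨M, hM1, hpos, hneg⟩ := eventually_sign p hodd ha
      set l : List Q := (List.range (p.natDegree + 1)).map p.coeff with hl
      have hev : ∀ x : Q, Polynomial.eval x p = evalList l x := fun x => eval_eq_evalList p x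
      set S : Set Q := {x | evalList l x < 0} with hS
      obtain ⟨u, hu⟩ := hsup S (definable_lt_zero l)
        ⟨-M, by
          simp only [hS, Set.mem_setOf_eq, ← hev]
          exact hneg (-M) (le_refl _)⟩
        ⟨M, fun x hx => by
          simp only [hS, Set.mem_setOf_eq, ← hev] at hx
          by_contra hcon
          push_neg at hcon
          exact absurd (hpos x (le_of_lt hcon)) (by linarith)⟩
      refine ⟨u, ?_⟩
      rcases lt_trichotomy (Polynomial.eval u p) 0 with h | h | h
      · exfalso
        rw [hev] at h
        obtain ⟨δ, hδ, hst⟩ := neg_stable l u h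
        have hmem : u + δ ∈ S := by
          simp only [hS, Set.mem_setOf_eq]
          exact hst (u + δ) (by rw [show u + δ - u = δ by ring, abs_of_pos hδ])
        have := hu.1 hmem
        linarith
      · exact h
      · exfalso
        rw [hev] at h
        obtain ⟨δ, hδ, hst⟩ := pos_stable l u h
        have hub : u - δ ∈ upperBounds S := by
          intro y hy
          have hyu : y ≤ u := hu.1 hy
          by_contra hcon
          push_neg at hcon
          have habs : |y - u| ≤ δ := abs_le.2 ⟨by linarith, by linarith⟩
          have := hst y habs
          simp only [hS, Set.mem_setOf_eq] at hy
          linarith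
        have := hu.2 hub
        linarith
    intro p hodd
    rcases lt_trichotomy p.leadingCoeff 0 with h | h | h
    · obtain ⟨x, hx⟩ := aux (-p) (by rwa [Polynomial.natDegree_neg])
        (by rw [Polynomial.leadingCoeff_neg]; linarith)
      exact ⟨x, by rw [Polynomial.eval_neg] at hx; linarith⟩
    · exfalso
      have : p = 0 := Polynomial.leadingCoeff_eq_zero.mp h
      rw [this] at hodd
      simp at hodd
    · exact aux p hodd h
end

section
/- Existence of faster-than-light motion is inconsistent with SpecRel for inertial observers but the axioms of SpecRel without AxPh do not imply NoFTL: there exists a model satisfying AxField, AxSelf, AxEv, AxSymd in which some inertial observer moves faster than light relative to another (i.e., there are inertial m, k and points x̄, ȳ on k's worldline in m's worldview with (x₁−y₁)²+(x₂−y₂)²+(x₃−y₃)² > (x₄−y₄)²). -/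
/-- Bodies of the Newtonian model: a (velocity, initial position) pair. -/
abbrev Bdy := (Fin 3 → ℝ) × (Fin 3 → ℝ)

/-- Newtonian (Galilean) worldview relation. -/
def Wn (o b : Bdy) (x : Fin 4 → ℝ) : Prop :=
  x 0 = (b.2 0 - o.2 0) + (b.1 0 - o.1 0) * x 3 ∧
  x 1 = (b.2 1 - o.2 1) + (b.1 1 - o.1 1) * x 3 ∧
  x 2 = (b.2 2 - o.2 2) + (b.1 2 - o.1 2) * x 3

lemma key (o o' : Bdy) (x x' : Fin 4 → ℝ) (h : ∀ b, Wn o b x ↔ Wn o' b x') :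
    x' 3 = x 3 ∧
    x' 0 = x 0 + (o.2 0 - o'.2 0) + (o.1 0 - o'.1 0) * x 3 ∧
    x' 1 = x 1 + (o.2 1 - o'.2 1) + (o.1 1 - o'.1 1) * x 3 ∧
    x' 2 = x 2 + (o.2 2 - o'.2 2) + (o.1 2 - o'.1 2) * x 3 := by
  have h1 : Wn o (o.1, ![x 0 + o.2 0, x 1 + o.2 1, x 2 + o.2 2]) x := by
    simp [Wn]
  have h2 : Wn o ((fun i => o.1 i + if i = 0 then (1:ℝ) else 0),
      ![x 0 + o.2 0 - x 3, x 1 + o.2 1, x 2 + o.2 2]) x := by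
    simp [Wn]; ring
  have g1 := (h _).1 h1
  have g2 := (h _).1 h2
  simp [Wn] at g1 g2
  obtain ⟨a1, b1, c1⟩ := g1
  obtain ⟨a2, b2, c2⟩ := g2
  have ht : x' 3 = x 3 := by nlinarith [a1, a2]
  refine ⟨ht, ?_, ?_, ?_⟩ <;> rw [ht] at a1 b1 c1 <;> linarith

theorem noFTL_independent_of_specrel_minus_axph :
    ∃ (B : Type) (IB Ph : B → Prop) (W : B → B → (Fin 4 → ℝ) → Prop),
      (∀ o, IOb IB W o →
        ∀ x : Fin 4 → ℝ, (W o o x ↔ x 0 = 0 ∧ x 1 = 0 ∧ x 2 = 0)) ∧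
      (∀ o o', IOb IB W o → IOb IB W o' →
        ∀ x : Fin 4 → ℝ, ∃ x' : Fin 4 → ℝ, ∀ b, W o b x ↔ W o' b x') ∧
      (∀ o o' (x y x' y' : Fin 4 → ℝ), IOb IB W o → IOb IB W o' →
        x 3 = y 3 → x' 3 = y' 3 →
        (∀ b, W o b x ↔ W o' b x') → (∀ b, W o b y ↔ W o' b y') →
        sp2 x y = sp2 x' y') ∧
      (∃ (m k : B) (x y : Fin 4 → ℝ), IOb IB W m ∧ IOb IB W k ∧
        W m k x ∧ W m k y ∧ sp2 x y > tm2 x y) := by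
  refine ⟨Bdy, fun _ => True, fun _ => False, Wn, ?_, ?_, ?_, ?_⟩
  · intro o _ x
    simp [Wn]
  · intro o o' _ _ x
    refine ⟨![x 0 + (o.2 0 - o'.2 0) + (o.1 0 - o'.1 0) * x 3,
              x 1 + (o.2 1 - o'.2 1) + (o.1 1 - o'.1 1) * x 3,
              x 2 + (o.2 2 - o'.2 2) + (o.1 2 - o'.1 2) * x 3, x 3], fun b => ?_⟩
    simp only [Wn, Matrix.cons_val_zero, Matrix.cons_val_one, Matrix.head_cons,
      Matrix.cons_val_two, Matrix.tail_cons, Matrix.cons_val_three]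
    constructor <;> rintro ⟨e1, e2, e3⟩ <;>
      exact ⟨by linear_combination e1, by linear_combination e2, by linear_combination e3⟩
  · intro o o' x y x' y' _ _ hxy _ hx hy
    obtain ⟨_, ex0, ex1, ex2⟩ := key o o' x x' hx
    obtain ⟨_, ey0, ey1, ey2⟩ := key o o' y y' hy
    simp only [sp2, ex0, ex1, ex2, ey0, ey1, ey2, hxy]
    ring
  · refine ⟨(0, 0), (![2, 0, 0], 0), (fun _ => 0), ![2, 0, 0, 1],
      ⟨trivial, (0, 0), fun _ => 0, by simp [Wn]⟩,
      ⟨trivial, (![2, 0, 0], 0), fun _ => 0, by simp [Wn]⟩, by simp [Wn], by norm_num [Wn, Matrix.cons_val_two, Matrix.cons_val_three, Matrix.tail_cons, Matrix.head_cons],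
      by norm_num [sp2, tm2, Matrix.cons_val_two, Matrix.cons_val_three, Matrix.tail_cons, Matrix.head_cons]⟩
end
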